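/- arXiv:1503.03658 — 2 statements merged into one kernel-verified Lean document; each statement's English description precedes it below -/
import Mathlib

section
/- (Proposition 2, positive recurrence of state 1) For the randomized Collatz chain started at X_0 = 1, the first return time T := inf{ n ≥ 1 : X_n = 1 } satisfies E[T] < ∞; in particular T < ∞ almost surely. -/
open MeasureTheory

lemma sqrtUB (a q : ℝ) (h : a ≤ q^2) (hq : 0 ≤ q) : Real.sqrt a ≤ q :=
  (Real.sqrt_le_left hq).2 h

lemma sqrtLB (a q : ℝ) (h : q^2 ≤ a) (hq : 0 ≤ q) : q ≤ Real.sqrt a :=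
  (Real.le_sqrt hq (le_trans (by positivity) h)).2 h

lemma sqrt_le_scale {a b c : ℝ} (hc : 0 ≤ c) (h : a ≤ c^2 * b) : Real.sqrt a ≤ c * Real.sqrt b := by
  calc Real.sqrt a ≤ Real.sqrt (c^2*b) := Real.sqrt_le_sqrt h
  _ = Real.sqrt (c^2) * Real.sqrt b := Real.sqrt_mul (by positivity) _
  _ = c * Real.sqrt b := by rw [Real.sqrt_sq hc]

def cstep (x j : ℕ) : ℕ := (3*x+j) / 2 ^ padicValNat 2 (3*x+j)

def eeQ : ℕ → ℚ
  | 3 => 27/5 | 7 => 208/5 | 11 => 104/5 | 13 => 209/10 | 15 => 3/5 | 17 => 317/10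
  | 23 => 59/10 | 27 => 107/10 | 29 => 68/5 | 33 => 8 | 43 => 43/5 | 45 => 79/10
  | _ => 0

noncomputable def eeR : ℕ → ℝ := fun y => (eeQ y : ℝ)

noncomputable def VR : ℕ → ℝ := fun y => if y = 1 then 0 else 100 * Real.sqrt y + eeR y

def driftIneq (x : ℕ) : Prop :=
  VR (cstep x 1) + VR (cstep x 3) + VR (cstep x 5) + VR (cstep x 7) + 4 ≤ 4 * VR x

lemma eeQ_nonneg (y : ℕ) : 0 ≤ eeQ y := by
  unfold eeQ; split <;> norm_num
lemma eeQ_le (y : ℕ) : eeQ y ≤ 42 := by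
  unfold eeQ; split <;> norm_num
lemma eeQ_zero (y : ℕ) (h : 75 ≤ y) : eeQ y = 0 := by
  unfold eeQ; split <;> first | rfl | omega

lemma eeR_nonneg (y : ℕ) : 0 ≤ eeR y := by
  unfold eeR; exact_mod_cast eeQ_nonneg y
lemma eeR_le (y : ℕ) : eeR y ≤ 42 := by
  unfold eeR; exact_mod_cast eeQ_le y
lemma eeR_zero (y : ℕ) (h : 75 ≤ y) : eeR y = 0 := by
  unfold eeR; exact_mod_cast congrArg (fun q : ℚ => (q:ℝ)) (eeQ_zero y h)

lemma VR_nonneg (y : ℕ) : 0 ≤ VR y := by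
  unfold VR; split_ifs
  · exact le_rfl
  · have := eeR_nonneg y
    have := Real.sqrt_nonneg (y:ℝ)
    linarith

lemma VR_le (y : ℕ) : VR y ≤ 100 * Real.sqrt y + eeR y := by
  unfold VR; split_ifs with h
  · have h1 := eeR_nonneg y
    have h2 := Real.sqrt_nonneg (y:ℝ)
    linarith
  · exact le_rfl

lemma pv_ge {m a : ℕ} (hm : m ≠ 0) (h : 2^a ∣ m) : a ≤ padicValNat 2 m := by
  rw [← Nat.factorization_def _ Nat.prime_two]
  exact (Nat.Prime.pow_dvd_iff_le_factorization Nat.prime_two hm).1 h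

lemma cstep_mul (x j : ℕ) :
    cstep x j * 2 ^ padicValNat 2 (3*x+j) = 3*x+j :=
  Nat.div_mul_cancel pow_padicValNat_dvd


lemma cstep_eq (x j d s : ℕ) (h : 3*x+j = 2^d * s) (hs : s % 2 = 1) : cstep x j = s := by
  have hs0 : s ≠ 0 := by omega
  have h2 : padicValNat 2 (3*x+j) = d := by
    rw [h, padicValNat.mul (by positivity) hs0, padicValNat.prime_pow,
      padicValNat.eq_zero_of_not_dvd (by omega)]
    omega
  rw [cstep, h2, h, Nat.mul_div_cancel_left _ (by positivity)]

lemma cstep_bound {x j a : ℕ} (hm : 3*x+j ≠ 0) (h : 2^a ∣ 3*x+j) :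
    cstep x j * 2^a ≤ 3*x+j := by
  have hd := pv_ge hm h
  calc cstep x j * 2^a ≤ cstep x j * 2 ^ padicValNat 2 (3*x+j) :=
    Nat.mul_le_mul_left _ (Nat.pow_le_pow_right (by norm_num) hd)
  _ = 3*x+j := cstep_mul x j

lemma cstep_small_dvd {x j : ℕ} (hx : 151 ≤ x) (hj : j ≠ 0) (hsm : cstep x j < 75) :
    (8:ℕ) ∣ 3*x+j := by
  have hmul := cstep_mul x j
  have hd3 : 3 ≤ padicValNat 2 (3*x+j) := by
    by_contra hlt
    have h2 : (2:ℕ)^(padicValNat 2 (3*x+j)) ≤ 4 := by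
      calc (2:ℕ)^(padicValNat 2 (3*x+j)) ≤ 2^2 := Nat.pow_le_pow_right (by norm_num) (by omega)
      _ = 4 := by norm_num
    have hle : 3*x+j ≤ 74 * 4 := by
      rw [← hmul]
      calc cstep x j * 2^(padicValNat 2 (3*x+j)) ≤ 74 * 2^(padicValNat 2 (3*x+j)) :=
        Nat.mul_le_mul_right _ (by omega)
      _ ≤ 74 * 4 := Nat.mul_le_mul_left _ h2
    omega
  have : (2:ℕ)^3 ∣ 3*x+j := dvd_trans (pow_dvd_pow 2 hd3) pow_padicValNat_dvd
  simpa using this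

lemma drift_tail (x : ℕ) (h2 : x % 2 = 1) (hge : 151 ≤ x) : driftIneq x := by
  have hm : ∀ j : ℕ, 3*x+j ≠ 0 := fun j => by omega
  have bnd : ∀ j a : ℕ, ∀ c : ℝ, 2^a ∣ 3*x+j → j ≤ 7 → 0 ≤ c → 1 ≤ c^2 * 2^a →
      Real.sqrt (cstep x j) ≤ c * Real.sqrt (3*(x:ℝ)+7) := by
    intro j a c hdvd hj hc hca
    apply sqrt_le_scale hc
    have hb := cstep_bound (hm j) hdvd
    have hb' : ((cstep x j : ℝ)) * 2^a ≤ 3*(x:ℝ)+7 := by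
      calc ((cstep x j : ℝ)) * 2^a = ((cstep x j * 2^a : ℕ) : ℝ) := by push_cast; ring
      _ ≤ ((3*x+j : ℕ) : ℝ) := by exact_mod_cast hb
      _ ≤ 3*(x:ℝ)+7 := by
          push_cast
          have : (j:ℝ) ≤ 7 := by exact_mod_cast hj
          linarith
    have h2a : (0:ℝ) < 2^a := by positivity
    nlinarith [Real.sqrt_nonneg (3*(x:ℝ)+7)]
  have hr : x % 8 = 1 ∨ x % 8 = 3 ∨ x % 8 = 5 ∨ x % 8 = 7 := by omega
  have hsum : Real.sqrt (cstep x 1) + Real.sqrt (cstep x 3) + Real.sqrt (cstep x 5)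
      + Real.sqrt (cstep x 7) ≤ (113389/50000) * Real.sqrt (3*(x:ℝ)+7) := by
    rcases hr with h8 | h8 | h8 | h8
    · have b1 := bnd 1 2 (1/2) (by omega) (by norm_num) (by norm_num) (by norm_num)
      have b3 := bnd 3 1 (70711/100000) (by omega) (by norm_num) (by norm_num) (by norm_num)
      have b5 := bnd 5 3 (35356/100000) (by omega) (by norm_num) (by norm_num) (by norm_num)
      have b7 := bnd 7 1 (70711/100000) (by omega) (by norm_num) (by norm_num) (by norm_num)
      linarith
    · have b1 := bnd 1 1 (70711/100000) (by omega) (by norm_num) (by norm_num) (by norm_num)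
      have b3 := bnd 3 2 (1/2) (by omega) (by norm_num) (by norm_num) (by norm_num)
      have b5 := bnd 5 1 (70711/100000) (by omega) (by norm_num) (by norm_num) (by norm_num)
      have b7 := bnd 7 3 (35356/100000) (by omega) (by norm_num) (by norm_num) (by norm_num)
      linarith
    · have b1 := bnd 1 3 (35356/100000) (by omega) (by norm_num) (by norm_num) (by norm_num)
      have b3 := bnd 3 1 (70711/100000) (by omega) (by norm_num) (by norm_num) (by norm_num)
      have b5 := bnd 5 2 (1/2) (by omega) (by norm_num) (by norm_num) (by norm_num)
      have b7 := bnd 7 1 (70711/100000) (by omega) (by norm_num) (by norm_num) (by norm_num)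
      linarith
    · have b1 := bnd 1 1 (70711/100000) (by omega) (by norm_num) (by norm_num) (by norm_num)
      have b3 := bnd 3 3 (35356/100000) (by omega) (by norm_num) (by norm_num) (by norm_num)
      have b5 := bnd 5 1 (70711/100000) (by omega) (by norm_num) (by norm_num) (by norm_num)
      have b7 := bnd 7 2 (1/2) (by omega) (by norm_num) (by norm_num) (by norm_num)
      linarith
  have hexcl : ∀ j j' : ℕ, j ≠ 0 → j' ≠ 0 → j ≤ 7 → j' ≤ 7 → j ≠ j' →
      cstep x j < 75 → cstep x j' < 75 → False := by
    intro j j' hj hj' hj7 hj7' hne hs hs'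
    have d1 := cstep_small_dvd hge hj hs
    have d2 := cstep_small_dvd hge hj' hs'
    omega
  have hee : eeR (cstep x 1) + eeR (cstep x 3) + eeR (cstep x 5) + eeR (cstep x 7) ≤ 42 := by
    have n1 := eeR_nonneg (cstep x 1)
    have n3 := eeR_nonneg (cstep x 3)
    have n5 := eeR_nonneg (cstep x 5)
    have n7 := eeR_nonneg (cstep x 7)
    by_cases b1 : cstep x 1 < 75
    · have z3 := eeR_zero (cstep x 3) (by by_contra h; exact hexcl 1 3 (by norm_num) (by norm_num) (by norm_num) (by norm_num) (by norm_num) b1 (by omega))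
      have z5 := eeR_zero (cstep x 5) (by by_contra h; exact hexcl 1 5 (by norm_num) (by norm_num) (by norm_num) (by norm_num) (by norm_num) b1 (by omega))
      have z7 := eeR_zero (cstep x 7) (by by_contra h; exact hexcl 1 7 (by norm_num) (by norm_num) (by norm_num) (by norm_num) (by norm_num) b1 (by omega))
      have := eeR_le (cstep x 1)
      linarith
    · have z1 : eeR (cstep x 1) = 0 := eeR_zero _ (by omega)
      by_cases b3 : cstep x 3 < 75
      · have z5 := eeR_zero (cstep x 5) (by by_contra h; exact hexcl 3 5 (by norm_num) (by norm_num) (by norm_num) (by norm_num) (by norm_num) b3 (by omega))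
        have z7 := eeR_zero (cstep x 7) (by by_contra h; exact hexcl 3 7 (by norm_num) (by norm_num) (by norm_num) (by norm_num) (by norm_num) b3 (by omega))
        have := eeR_le (cstep x 3)
        linarith
      · have z3 : eeR (cstep x 3) = 0 := eeR_zero _ (by omega)
        by_cases b5 : cstep x 5 < 75
        · have z7 := eeR_zero (cstep x 7) (by by_contra h; exact hexcl 5 7 (by norm_num) (by norm_num) (by norm_num) (by norm_num) (by norm_num) b5 (by omega))
          have := eeR_le (cstep x 5)
          linarith
        · have z5 : eeR (cstep x 5) = 0 := eeR_zero _ (by omega)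
          have := eeR_le (cstep x 7)
          linarith
  have hq : Real.sqrt (3*(x:ℝ)+7) ≤ (1091/625) * Real.sqrt x := by
    apply sqrt_le_scale (by norm_num)
    have : (151:ℝ) ≤ x := by exact_mod_cast hge
    nlinarith
  have hx12 : (12:ℝ) ≤ Real.sqrt x := by
    apply sqrtLB
    · have : (151:ℝ) ≤ x := by exact_mod_cast hge
      nlinarith
    · norm_num
  have hVRx : VR x = 100 * Real.sqrt x := by
    unfold VR
    rw [if_neg (by omega), eeR_zero x (by omega), add_zero]
  rw [driftIneq, hVRx]
  have l1 := VR_le (cstep x 1)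
  have l3 := VR_le (cstep x 3)
  have l5 := VR_le (cstep x 5)
  have l7 := VR_le (cstep x 7)
  have hqnn := Real.sqrt_nonneg (3*(x:ℝ)+7)
  nlinarith [hsum, hee, hq, hx12]

lemma case_3 : driftIneq 3 := by
  have c1 : cstep 3 1 = 5 := cstep_eq _ _ 1 _ (by norm_num) (by norm_num)
  have c3 : cstep 3 3 = 3 := cstep_eq _ _ 2 _ (by norm_num) (by norm_num)
  have c5 : cstep 3 5 = 7 := cstep_eq _ _ 1 _ (by norm_num) (by norm_num)
  have c7 : cstep 3 7 = 1 := cstep_eq _ _ 4 _ (by norm_num) (by norm_num)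
  rw [driftIneq, c1, c3, c5, c7]
  have hu3 : Real.sqrt 3 ≤ (86603/50000) := sqrtUB _ _ (by norm_num) (by norm_num)
  have hu5 : Real.sqrt 5 ≤ (223607/100000) := sqrtUB _ _ (by norm_num) (by norm_num)
  have hu7 : Real.sqrt 7 ≤ (8268/3125) := sqrtUB _ _ (by norm_num) (by norm_num)
  have hl3 : ((34641/20000):ℝ) ≤ Real.sqrt 3 := sqrtLB _ _ (by norm_num) (by norm_num)
  simp only [VR, eeR, eeQ]
  norm_num
  linarith

lemma case_5 : driftIneq 5 := by
  have c1 : cstep 5 1 = 1 := cstep_eq _ _ 4 _ (by norm_num) (by norm_num)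
  have c3 : cstep 5 3 = 9 := cstep_eq _ _ 1 _ (by norm_num) (by norm_num)
  have c5 : cstep 5 5 = 5 := cstep_eq _ _ 2 _ (by norm_num) (by norm_num)
  have c7 : cstep 5 7 = 11 := cstep_eq _ _ 1 _ (by norm_num) (by norm_num)
  rw [driftIneq, c1, c3, c5, c7]
  have hu5 : Real.sqrt 5 ≤ (223607/100000) := sqrtUB _ _ (by norm_num) (by norm_num)
  have hu9 : Real.sqrt 9 ≤ 3 := sqrtUB _ _ (by norm_num) (by norm_num)
  have hu11 : Real.sqrt 11 ≤ (331663/100000) := sqrtUB _ _ (by norm_num) (by norm_num)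
  have hl5 : ((111803/50000):ℝ) ≤ Real.sqrt 5 := sqrtLB _ _ (by norm_num) (by norm_num)
  simp only [VR, eeR, eeQ]
  norm_num
  linarith

lemma case_7 : driftIneq 7 := by
  have c1 : cstep 7 1 = 11 := cstep_eq _ _ 1 _ (by norm_num) (by norm_num)
  have c3 : cstep 7 3 = 3 := cstep_eq _ _ 3 _ (by norm_num) (by norm_num)
  have c5 : cstep 7 5 = 13 := cstep_eq _ _ 1 _ (by norm_num) (by norm_num)
  have c7 : cstep 7 7 = 7 := cstep_eq _ _ 2 _ (by norm_num) (by norm_num)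
  rw [driftIneq, c1, c3, c5, c7]
  have hu3 : Real.sqrt 3 ≤ (86603/50000) := sqrtUB _ _ (by norm_num) (by norm_num)
  have hu7 : Real.sqrt 7 ≤ (8268/3125) := sqrtUB _ _ (by norm_num) (by norm_num)
  have hu11 : Real.sqrt 11 ≤ (331663/100000) := sqrtUB _ _ (by norm_num) (by norm_num)
  have hu13 : Real.sqrt 13 ≤ (90139/25000) := sqrtUB _ _ (by norm_num) (by norm_num)
  have hl7 : ((10583/4000):ℝ) ≤ Real.sqrt 7 := sqrtLB _ _ (by norm_num) (by norm_num)
  simp only [VR, eeR, eeQ]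
  norm_num
  linarith

lemma case_9 : driftIneq 9 := by
  have c1 : cstep 9 1 = 7 := cstep_eq _ _ 2 _ (by norm_num) (by norm_num)
  have c3 : cstep 9 3 = 15 := cstep_eq _ _ 1 _ (by norm_num) (by norm_num)
  have c5 : cstep 9 5 = 1 := cstep_eq _ _ 5 _ (by norm_num) (by norm_num)
  have c7 : cstep 9 7 = 17 := cstep_eq _ _ 1 _ (by norm_num) (by norm_num)
  rw [driftIneq, c1, c3, c5, c7]
  have hu7 : Real.sqrt 7 ≤ (8268/3125) := sqrtUB _ _ (by norm_num) (by norm_num)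
  have hu15 : Real.sqrt 15 ≤ (387299/100000) := sqrtUB _ _ (by norm_num) (by norm_num)
  have hu17 : Real.sqrt 17 ≤ (412311/100000) := sqrtUB _ _ (by norm_num) (by norm_num)
  have hl9 : (3:ℝ) ≤ Real.sqrt 9 := sqrtLB _ _ (by norm_num) (by norm_num)
  simp only [VR, eeR, eeQ]
  norm_num
  linarith

lemma case_11 : driftIneq 11 := by
  have c1 : cstep 11 1 = 17 := cstep_eq _ _ 1 _ (by norm_num) (by norm_num)
  have c3 : cstep 11 3 = 9 := cstep_eq _ _ 2 _ (by norm_num) (by norm_num)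
  have c5 : cstep 11 5 = 19 := cstep_eq _ _ 1 _ (by norm_num) (by norm_num)
  have c7 : cstep 11 7 = 5 := cstep_eq _ _ 3 _ (by norm_num) (by norm_num)
  rw [driftIneq, c1, c3, c5, c7]
  have hu5 : Real.sqrt 5 ≤ (223607/100000) := sqrtUB _ _ (by norm_num) (by norm_num)
  have hu9 : Real.sqrt 9 ≤ 3 := sqrtUB _ _ (by norm_num) (by norm_num)
  have hu17 : Real.sqrt 17 ≤ (412311/100000) := sqrtUB _ _ (by norm_num) (by norm_num)
  have hu19 : Real.sqrt 19 ≤ (43589/10000) := sqrtUB _ _ (by norm_num) (by norm_num)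
  have hl11 : ((165831/50000):ℝ) ≤ Real.sqrt 11 := sqrtLB _ _ (by norm_num) (by norm_num)
  simp only [VR, eeR, eeQ]
  norm_num
  linarith

lemma case_13 : driftIneq 13 := by
  have c1 : cstep 13 1 = 5 := cstep_eq _ _ 3 _ (by norm_num) (by norm_num)
  have c3 : cstep 13 3 = 21 := cstep_eq _ _ 1 _ (by norm_num) (by norm_num)
  have c5 : cstep 13 5 = 11 := cstep_eq _ _ 2 _ (by norm_num) (by norm_num)
  have c7 : cstep 13 7 = 23 := cstep_eq _ _ 1 _ (by norm_num) (by norm_num)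
  rw [driftIneq, c1, c3, c5, c7]
  have hu5 : Real.sqrt 5 ≤ (223607/100000) := sqrtUB _ _ (by norm_num) (by norm_num)
  have hu11 : Real.sqrt 11 ≤ (331663/100000) := sqrtUB _ _ (by norm_num) (by norm_num)
  have hu21 : Real.sqrt 21 ≤ (229129/50000) := sqrtUB _ _ (by norm_num) (by norm_num)
  have hu23 : Real.sqrt 23 ≤ (14987/3125) := sqrtUB _ _ (by norm_num) (by norm_num)
  have hl13 : ((72111/20000):ℝ) ≤ Real.sqrt 13 := sqrtLB _ _ (by norm_num) (by norm_num)
  simp only [VR, eeR, eeQ]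
  norm_num
  linarith

lemma case_15 : driftIneq 15 := by
  have c1 : cstep 15 1 = 23 := cstep_eq _ _ 1 _ (by norm_num) (by norm_num)
  have c3 : cstep 15 3 = 3 := cstep_eq _ _ 4 _ (by norm_num) (by norm_num)
  have c5 : cstep 15 5 = 25 := cstep_eq _ _ 1 _ (by norm_num) (by norm_num)
  have c7 : cstep 15 7 = 13 := cstep_eq _ _ 2 _ (by norm_num) (by norm_num)
  rw [driftIneq, c1, c3, c5, c7]
  have hu3 : Real.sqrt 3 ≤ (86603/50000) := sqrtUB _ _ (by norm_num) (by norm_num)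
  have hu13 : Real.sqrt 13 ≤ (90139/25000) := sqrtUB _ _ (by norm_num) (by norm_num)
  have hu23 : Real.sqrt 23 ≤ (14987/3125) := sqrtUB _ _ (by norm_num) (by norm_num)
  have hu25 : Real.sqrt 25 ≤ 5 := sqrtUB _ _ (by norm_num) (by norm_num)
  have hl15 : ((193649/50000):ℝ) ≤ Real.sqrt 15 := sqrtLB _ _ (by norm_num) (by norm_num)
  simp only [VR, eeR, eeQ]
  norm_num
  linarith

lemma case_17 : driftIneq 17 := by
  have c1 : cstep 17 1 = 13 := cstep_eq _ _ 2 _ (by norm_num) (by norm_num)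
  have c3 : cstep 17 3 = 27 := cstep_eq _ _ 1 _ (by norm_num) (by norm_num)
  have c5 : cstep 17 5 = 7 := cstep_eq _ _ 3 _ (by norm_num) (by norm_num)
  have c7 : cstep 17 7 = 29 := cstep_eq _ _ 1 _ (by norm_num) (by norm_num)
  rw [driftIneq, c1, c3, c5, c7]
  have hu7 : Real.sqrt 7 ≤ (8268/3125) := sqrtUB _ _ (by norm_num) (by norm_num)
  have hu13 : Real.sqrt 13 ≤ (90139/25000) := sqrtUB _ _ (by norm_num) (by norm_num)
  have hu27 : Real.sqrt 27 ≤ (16238/3125) := sqrtUB _ _ (by norm_num) (by norm_num)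
  have hu29 : Real.sqrt 29 ≤ (538517/100000) := sqrtUB _ _ (by norm_num) (by norm_num)
  have hl17 : ((41231/10000):ℝ) ≤ Real.sqrt 17 := sqrtLB _ _ (by norm_num) (by norm_num)
  simp only [VR, eeR, eeQ]
  norm_num
  linarith

lemma case_19 : driftIneq 19 := by
  have c1 : cstep 19 1 = 29 := cstep_eq _ _ 1 _ (by norm_num) (by norm_num)
  have c3 : cstep 19 3 = 15 := cstep_eq _ _ 2 _ (by norm_num) (by norm_num)
  have c5 : cstep 19 5 = 31 := cstep_eq _ _ 1 _ (by norm_num) (by norm_num)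
  have c7 : cstep 19 7 = 1 := cstep_eq _ _ 6 _ (by norm_num) (by norm_num)
  rw [driftIneq, c1, c3, c5, c7]
  have hu15 : Real.sqrt 15 ≤ (387299/100000) := sqrtUB _ _ (by norm_num) (by norm_num)
  have hu29 : Real.sqrt 29 ≤ (538517/100000) := sqrtUB _ _ (by norm_num) (by norm_num)
  have hu31 : Real.sqrt 31 ≤ (556777/100000) := sqrtUB _ _ (by norm_num) (by norm_num)
  have hl19 : ((435889/100000):ℝ) ≤ Real.sqrt 19 := sqrtLB _ _ (by norm_num) (by norm_num)
  simp only [VR, eeR, eeQ]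
  norm_num
  linarith

lemma case_21 : driftIneq 21 := by
  have c1 : cstep 21 1 = 1 := cstep_eq _ _ 6 _ (by norm_num) (by norm_num)
  have c3 : cstep 21 3 = 33 := cstep_eq _ _ 1 _ (by norm_num) (by norm_num)
  have c5 : cstep 21 5 = 17 := cstep_eq _ _ 2 _ (by norm_num) (by norm_num)
  have c7 : cstep 21 7 = 35 := cstep_eq _ _ 1 _ (by norm_num) (by norm_num)
  rw [driftIneq, c1, c3, c5, c7]
  have hu17 : Real.sqrt 17 ≤ (412311/100000) := sqrtUB _ _ (by norm_num) (by norm_num)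
  have hu33 : Real.sqrt 33 ≤ (574457/100000) := sqrtUB _ _ (by norm_num) (by norm_num)
  have hu35 : Real.sqrt 35 ≤ (73951/12500) := sqrtUB _ _ (by norm_num) (by norm_num)
  have hl21 : ((458257/100000):ℝ) ≤ Real.sqrt 21 := sqrtLB _ _ (by norm_num) (by norm_num)
  simp only [VR, eeR, eeQ]
  norm_num
  linarith

lemma case_23 : driftIneq 23 := by
  have c1 : cstep 23 1 = 35 := cstep_eq _ _ 1 _ (by norm_num) (by norm_num)
  have c3 : cstep 23 3 = 9 := cstep_eq _ _ 3 _ (by norm_num) (by norm_num)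
  have c5 : cstep 23 5 = 37 := cstep_eq _ _ 1 _ (by norm_num) (by norm_num)
  have c7 : cstep 23 7 = 19 := cstep_eq _ _ 2 _ (by norm_num) (by norm_num)
  rw [driftIneq, c1, c3, c5, c7]
  have hu9 : Real.sqrt 9 ≤ 3 := sqrtUB _ _ (by norm_num) (by norm_num)
  have hu19 : Real.sqrt 19 ≤ (43589/10000) := sqrtUB _ _ (by norm_num) (by norm_num)
  have hu35 : Real.sqrt 35 ≤ (73951/12500) := sqrtUB _ _ (by norm_num) (by norm_num)
  have hu37 : Real.sqrt 37 ≤ (608277/100000) := sqrtUB _ _ (by norm_num) (by norm_num)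
  have hl23 : ((479583/100000):ℝ) ≤ Real.sqrt 23 := sqrtLB _ _ (by norm_num) (by norm_num)
  simp only [VR, eeR, eeQ]
  norm_num
  linarith

lemma case_25 : driftIneq 25 := by
  have c1 : cstep 25 1 = 19 := cstep_eq _ _ 2 _ (by norm_num) (by norm_num)
  have c3 : cstep 25 3 = 39 := cstep_eq _ _ 1 _ (by norm_num) (by norm_num)
  have c5 : cstep 25 5 = 5 := cstep_eq _ _ 4 _ (by norm_num) (by norm_num)
  have c7 : cstep 25 7 = 41 := cstep_eq _ _ 1 _ (by norm_num) (by norm_num)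
  rw [driftIneq, c1, c3, c5, c7]
  have hu5 : Real.sqrt 5 ≤ (223607/100000) := sqrtUB _ _ (by norm_num) (by norm_num)
  have hu19 : Real.sqrt 19 ≤ (43589/10000) := sqrtUB _ _ (by norm_num) (by norm_num)
  have hu39 : Real.sqrt 39 ≤ (1249/200) := sqrtUB _ _ (by norm_num) (by norm_num)
  have hu41 : Real.sqrt 41 ≤ (640313/100000) := sqrtUB _ _ (by norm_num) (by norm_num)
  have hl25 : (5:ℝ) ≤ Real.sqrt 25 := sqrtLB _ _ (by norm_num) (by norm_num)
  simp only [VR, eeR, eeQ]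
  norm_num
  linarith

lemma case_27 : driftIneq 27 := by
  have c1 : cstep 27 1 = 41 := cstep_eq _ _ 1 _ (by norm_num) (by norm_num)
  have c3 : cstep 27 3 = 21 := cstep_eq _ _ 2 _ (by norm_num) (by norm_num)
  have c5 : cstep 27 5 = 43 := cstep_eq _ _ 1 _ (by norm_num) (by norm_num)
  have c7 : cstep 27 7 = 11 := cstep_eq _ _ 3 _ (by norm_num) (by norm_num)
  rw [driftIneq, c1, c3, c5, c7]
  have hu11 : Real.sqrt 11 ≤ (331663/100000) := sqrtUB _ _ (by norm_num) (by norm_num)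
  have hu21 : Real.sqrt 21 ≤ (229129/50000) := sqrtUB _ _ (by norm_num) (by norm_num)
  have hu41 : Real.sqrt 41 ≤ (640313/100000) := sqrtUB _ _ (by norm_num) (by norm_num)
  have hu43 : Real.sqrt 43 ≤ (20492/3125) := sqrtUB _ _ (by norm_num) (by norm_num)
  have hl27 : ((103923/20000):ℝ) ≤ Real.sqrt 27 := sqrtLB _ _ (by norm_num) (by norm_num)
  simp only [VR, eeR, eeQ]
  norm_num
  linarith

lemma case_29 : driftIneq 29 := by
  have c1 : cstep 29 1 = 11 := cstep_eq _ _ 3 _ (by norm_num) (by norm_num)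
  have c3 : cstep 29 3 = 45 := cstep_eq _ _ 1 _ (by norm_num) (by norm_num)
  have c5 : cstep 29 5 = 23 := cstep_eq _ _ 2 _ (by norm_num) (by norm_num)
  have c7 : cstep 29 7 = 47 := cstep_eq _ _ 1 _ (by norm_num) (by norm_num)
  rw [driftIneq, c1, c3, c5, c7]
  have hu11 : Real.sqrt 11 ≤ (331663/100000) := sqrtUB _ _ (by norm_num) (by norm_num)
  have hu23 : Real.sqrt 23 ≤ (14987/3125) := sqrtUB _ _ (by norm_num) (by norm_num)
  have hu45 : Real.sqrt 45 ≤ (670821/100000) := sqrtUB _ _ (by norm_num) (by norm_num)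
  have hu47 : Real.sqrt 47 ≤ (342783/50000) := sqrtUB _ _ (by norm_num) (by norm_num)
  have hl29 : ((134629/25000):ℝ) ≤ Real.sqrt 29 := sqrtLB _ _ (by norm_num) (by norm_num)
  simp only [VR, eeR, eeQ]
  norm_num
  linarith

lemma case_31 : driftIneq 31 := by
  have c1 : cstep 31 1 = 47 := cstep_eq _ _ 1 _ (by norm_num) (by norm_num)
  have c3 : cstep 31 3 = 3 := cstep_eq _ _ 5 _ (by norm_num) (by norm_num)
  have c5 : cstep 31 5 = 49 := cstep_eq _ _ 1 _ (by norm_num) (by norm_num)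
  have c7 : cstep 31 7 = 25 := cstep_eq _ _ 2 _ (by norm_num) (by norm_num)
  rw [driftIneq, c1, c3, c5, c7]
  have hu3 : Real.sqrt 3 ≤ (86603/50000) := sqrtUB _ _ (by norm_num) (by norm_num)
  have hu25 : Real.sqrt 25 ≤ 5 := sqrtUB _ _ (by norm_num) (by norm_num)
  have hu47 : Real.sqrt 47 ≤ (342783/50000) := sqrtUB _ _ (by norm_num) (by norm_num)
  have hu49 : Real.sqrt 49 ≤ 7 := sqrtUB _ _ (by norm_num) (by norm_num)
  have hl31 : ((69597/12500):ℝ) ≤ Real.sqrt 31 := sqrtLB _ _ (by norm_num) (by norm_num)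
  simp only [VR, eeR, eeQ]
  norm_num
  linarith

lemma case_33 : driftIneq 33 := by
  have c1 : cstep 33 1 = 25 := cstep_eq _ _ 2 _ (by norm_num) (by norm_num)
  have c3 : cstep 33 3 = 51 := cstep_eq _ _ 1 _ (by norm_num) (by norm_num)
  have c5 : cstep 33 5 = 13 := cstep_eq _ _ 3 _ (by norm_num) (by norm_num)
  have c7 : cstep 33 7 = 53 := cstep_eq _ _ 1 _ (by norm_num) (by norm_num)
  rw [driftIneq, c1, c3, c5, c7]
  have hu13 : Real.sqrt 13 ≤ (90139/25000) := sqrtUB _ _ (by norm_num) (by norm_num)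
  have hu25 : Real.sqrt 25 ≤ 5 := sqrtUB _ _ (by norm_num) (by norm_num)
  have hu51 : Real.sqrt 51 ≤ (714143/100000) := sqrtUB _ _ (by norm_num) (by norm_num)
  have hu53 : Real.sqrt 53 ≤ (728011/100000) := sqrtUB _ _ (by norm_num) (by norm_num)
  have hl33 : ((71807/12500):ℝ) ≤ Real.sqrt 33 := sqrtLB _ _ (by norm_num) (by norm_num)
  simp only [VR, eeR, eeQ]
  norm_num
  linarith

lemma case_35 : driftIneq 35 := by
  have c1 : cstep 35 1 = 53 := cstep_eq _ _ 1 _ (by norm_num) (by norm_num)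
  have c3 : cstep 35 3 = 27 := cstep_eq _ _ 2 _ (by norm_num) (by norm_num)
  have c5 : cstep 35 5 = 55 := cstep_eq _ _ 1 _ (by norm_num) (by norm_num)
  have c7 : cstep 35 7 = 7 := cstep_eq _ _ 4 _ (by norm_num) (by norm_num)
  rw [driftIneq, c1, c3, c5, c7]
  have hu7 : Real.sqrt 7 ≤ (8268/3125) := sqrtUB _ _ (by norm_num) (by norm_num)
  have hu27 : Real.sqrt 27 ≤ (16238/3125) := sqrtUB _ _ (by norm_num) (by norm_num)
  have hu53 : Real.sqrt 53 ≤ (728011/100000) := sqrtUB _ _ (by norm_num) (by norm_num)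
  have hu55 : Real.sqrt 55 ≤ (37081/5000) := sqrtUB _ _ (by norm_num) (by norm_num)
  have hl35 : ((591607/100000):ℝ) ≤ Real.sqrt 35 := sqrtLB _ _ (by norm_num) (by norm_num)
  simp only [VR, eeR, eeQ]
  norm_num
  linarith

lemma case_37 : driftIneq 37 := by
  have c1 : cstep 37 1 = 7 := cstep_eq _ _ 4 _ (by norm_num) (by norm_num)
  have c3 : cstep 37 3 = 57 := cstep_eq _ _ 1 _ (by norm_num) (by norm_num)
  have c5 : cstep 37 5 = 29 := cstep_eq _ _ 2 _ (by norm_num) (by norm_num)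
  have c7 : cstep 37 7 = 59 := cstep_eq _ _ 1 _ (by norm_num) (by norm_num)
  rw [driftIneq, c1, c3, c5, c7]
  have hu7 : Real.sqrt 7 ≤ (8268/3125) := sqrtUB _ _ (by norm_num) (by norm_num)
  have hu29 : Real.sqrt 29 ≤ (538517/100000) := sqrtUB _ _ (by norm_num) (by norm_num)
  have hu57 : Real.sqrt 57 ≤ (94373/12500) := sqrtUB _ _ (by norm_num) (by norm_num)
  have hu59 : Real.sqrt 59 ≤ (153623/20000) := sqrtUB _ _ (by norm_num) (by norm_num)
  have hl37 : ((152069/25000):ℝ) ≤ Real.sqrt 37 := sqrtLB _ _ (by norm_num) (by norm_num)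
  simp only [VR, eeR, eeQ]
  norm_num
  linarith

lemma case_39 : driftIneq 39 := by
  have c1 : cstep 39 1 = 59 := cstep_eq _ _ 1 _ (by norm_num) (by norm_num)
  have c3 : cstep 39 3 = 15 := cstep_eq _ _ 3 _ (by norm_num) (by norm_num)
  have c5 : cstep 39 5 = 61 := cstep_eq _ _ 1 _ (by norm_num) (by norm_num)
  have c7 : cstep 39 7 = 31 := cstep_eq _ _ 2 _ (by norm_num) (by norm_num)
  rw [driftIneq, c1, c3, c5, c7]
  have hu15 : Real.sqrt 15 ≤ (387299/100000) := sqrtUB _ _ (by norm_num) (by norm_num)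
  have hu31 : Real.sqrt 31 ≤ (556777/100000) := sqrtUB _ _ (by norm_num) (by norm_num)
  have hu59 : Real.sqrt 59 ≤ (153623/20000) := sqrtUB _ _ (by norm_num) (by norm_num)
  have hu61 : Real.sqrt 61 ≤ (31241/4000) := sqrtUB _ _ (by norm_num) (by norm_num)
  have hl39 : ((624499/100000):ℝ) ≤ Real.sqrt 39 := sqrtLB _ _ (by norm_num) (by norm_num)
  simp only [VR, eeR, eeQ]
  norm_num
  linarith

lemma case_41 : driftIneq 41 := by
  have c1 : cstep 41 1 = 31 := cstep_eq _ _ 2 _ (by norm_num) (by norm_num)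
  have c3 : cstep 41 3 = 63 := cstep_eq _ _ 1 _ (by norm_num) (by norm_num)
  have c5 : cstep 41 5 = 1 := cstep_eq _ _ 7 _ (by norm_num) (by norm_num)
  have c7 : cstep 41 7 = 65 := cstep_eq _ _ 1 _ (by norm_num) (by norm_num)
  rw [driftIneq, c1, c3, c5, c7]
  have hu31 : Real.sqrt 31 ≤ (556777/100000) := sqrtUB _ _ (by norm_num) (by norm_num)
  have hu63 : Real.sqrt 63 ≤ (396863/50000) := sqrtUB _ _ (by norm_num) (by norm_num)
  have hu65 : Real.sqrt 65 ≤ (403113/50000) := sqrtUB _ _ (by norm_num) (by norm_num)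
  have hl41 : ((80039/12500):ℝ) ≤ Real.sqrt 41 := sqrtLB _ _ (by norm_num) (by norm_num)
  simp only [VR, eeR, eeQ]
  norm_num
  linarith

lemma case_43 : driftIneq 43 := by
  have c1 : cstep 43 1 = 65 := cstep_eq _ _ 1 _ (by norm_num) (by norm_num)
  have c3 : cstep 43 3 = 33 := cstep_eq _ _ 2 _ (by norm_num) (by norm_num)
  have c5 : cstep 43 5 = 67 := cstep_eq _ _ 1 _ (by norm_num) (by norm_num)
  have c7 : cstep 43 7 = 17 := cstep_eq _ _ 3 _ (by norm_num) (by norm_num)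
  rw [driftIneq, c1, c3, c5, c7]
  have hu17 : Real.sqrt 17 ≤ (412311/100000) := sqrtUB _ _ (by norm_num) (by norm_num)
  have hu33 : Real.sqrt 33 ≤ (574457/100000) := sqrtUB _ _ (by norm_num) (by norm_num)
  have hu65 : Real.sqrt 65 ≤ (403113/50000) := sqrtUB _ _ (by norm_num) (by norm_num)
  have hu67 : Real.sqrt 67 ≤ (102317/12500) := sqrtUB _ _ (by norm_num) (by norm_num)
  have hl43 : ((655743/100000):ℝ) ≤ Real.sqrt 43 := sqrtLB _ _ (by norm_num) (by norm_num)
  simp only [VR, eeR, eeQ]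
  norm_num
  linarith

lemma case_45 : driftIneq 45 := by
  have c1 : cstep 45 1 = 17 := cstep_eq _ _ 3 _ (by norm_num) (by norm_num)
  have c3 : cstep 45 3 = 69 := cstep_eq _ _ 1 _ (by norm_num) (by norm_num)
  have c5 : cstep 45 5 = 35 := cstep_eq _ _ 2 _ (by norm_num) (by norm_num)
  have c7 : cstep 45 7 = 71 := cstep_eq _ _ 1 _ (by norm_num) (by norm_num)
  rw [driftIneq, c1, c3, c5, c7]
  have hu17 : Real.sqrt 17 ≤ (412311/100000) := sqrtUB _ _ (by norm_num) (by norm_num)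
  have hu35 : Real.sqrt 35 ≤ (73951/12500) := sqrtUB _ _ (by norm_num) (by norm_num)
  have hu69 : Real.sqrt 69 ≤ (830663/100000) := sqrtUB _ _ (by norm_num) (by norm_num)
  have hu71 : Real.sqrt 71 ≤ (168523/20000) := sqrtUB _ _ (by norm_num) (by norm_num)
  have hl45 : ((33541/5000):ℝ) ≤ Real.sqrt 45 := sqrtLB _ _ (by norm_num) (by norm_num)
  simp only [VR, eeR, eeQ]
  norm_num
  linarith

lemma case_47 : driftIneq 47 := by
  have c1 : cstep 47 1 = 71 := cstep_eq _ _ 1 _ (by norm_num) (by norm_num)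
  have c3 : cstep 47 3 = 9 := cstep_eq _ _ 4 _ (by norm_num) (by norm_num)
  have c5 : cstep 47 5 = 73 := cstep_eq _ _ 1 _ (by norm_num) (by norm_num)
  have c7 : cstep 47 7 = 37 := cstep_eq _ _ 2 _ (by norm_num) (by norm_num)
  rw [driftIneq, c1, c3, c5, c7]
  have hu9 : Real.sqrt 9 ≤ 3 := sqrtUB _ _ (by norm_num) (by norm_num)
  have hu37 : Real.sqrt 37 ≤ (608277/100000) := sqrtUB _ _ (by norm_num) (by norm_num)
  have hu71 : Real.sqrt 71 ≤ (168523/20000) := sqrtUB _ _ (by norm_num) (by norm_num)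
  have hu73 : Real.sqrt 73 ≤ (854401/100000) := sqrtUB _ _ (by norm_num) (by norm_num)
  have hl47 : ((137113/20000):ℝ) ≤ Real.sqrt 47 := sqrtLB _ _ (by norm_num) (by norm_num)
  simp only [VR, eeR, eeQ]
  norm_num
  linarith

lemma case_49 : driftIneq 49 := by
  have c1 : cstep 49 1 = 37 := cstep_eq _ _ 2 _ (by norm_num) (by norm_num)
  have c3 : cstep 49 3 = 75 := cstep_eq _ _ 1 _ (by norm_num) (by norm_num)
  have c5 : cstep 49 5 = 19 := cstep_eq _ _ 3 _ (by norm_num) (by norm_num)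
  have c7 : cstep 49 7 = 77 := cstep_eq _ _ 1 _ (by norm_num) (by norm_num)
  rw [driftIneq, c1, c3, c5, c7]
  have hu19 : Real.sqrt 19 ≤ (43589/10000) := sqrtUB _ _ (by norm_num) (by norm_num)
  have hu37 : Real.sqrt 37 ≤ (608277/100000) := sqrtUB _ _ (by norm_num) (by norm_num)
  have hu75 : Real.sqrt 75 ≤ (433013/50000) := sqrtUB _ _ (by norm_num) (by norm_num)
  have hu77 : Real.sqrt 77 ≤ (877497/100000) := sqrtUB _ _ (by norm_num) (by norm_num)
  have hl49 : (7:ℝ) ≤ Real.sqrt 49 := sqrtLB _ _ (by norm_num) (by norm_num)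
  simp only [VR, eeR, eeQ]
  norm_num
  linarith

lemma case_51 : driftIneq 51 := by
  have c1 : cstep 51 1 = 77 := cstep_eq _ _ 1 _ (by norm_num) (by norm_num)
  have c3 : cstep 51 3 = 39 := cstep_eq _ _ 2 _ (by norm_num) (by norm_num)
  have c5 : cstep 51 5 = 79 := cstep_eq _ _ 1 _ (by norm_num) (by norm_num)
  have c7 : cstep 51 7 = 5 := cstep_eq _ _ 5 _ (by norm_num) (by norm_num)
  rw [driftIneq, c1, c3, c5, c7]
  have hu5 : Real.sqrt 5 ≤ (223607/100000) := sqrtUB _ _ (by norm_num) (by norm_num)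
  have hu39 : Real.sqrt 39 ≤ (1249/200) := sqrtUB _ _ (by norm_num) (by norm_num)
  have hu77 : Real.sqrt 77 ≤ (877497/100000) := sqrtUB _ _ (by norm_num) (by norm_num)
  have hu79 : Real.sqrt 79 ≤ (44441/5000) := sqrtUB _ _ (by norm_num) (by norm_num)
  have hl51 : ((357071/50000):ℝ) ≤ Real.sqrt 51 := sqrtLB _ _ (by norm_num) (by norm_num)
  simp only [VR, eeR, eeQ]
  norm_num
  linarith

lemma case_53 : driftIneq 53 := by
  have c1 : cstep 53 1 = 5 := cstep_eq _ _ 5 _ (by norm_num) (by norm_num)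
  have c3 : cstep 53 3 = 81 := cstep_eq _ _ 1 _ (by norm_num) (by norm_num)
  have c5 : cstep 53 5 = 41 := cstep_eq _ _ 2 _ (by norm_num) (by norm_num)
  have c7 : cstep 53 7 = 83 := cstep_eq _ _ 1 _ (by norm_num) (by norm_num)
  rw [driftIneq, c1, c3, c5, c7]
  have hu5 : Real.sqrt 5 ≤ (223607/100000) := sqrtUB _ _ (by norm_num) (by norm_num)
  have hu41 : Real.sqrt 41 ≤ (640313/100000) := sqrtUB _ _ (by norm_num) (by norm_num)
  have hu81 : Real.sqrt 81 ≤ 9 := sqrtUB _ _ (by norm_num) (by norm_num)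
  have hu83 : Real.sqrt 83 ≤ (227761/25000) := sqrtUB _ _ (by norm_num) (by norm_num)
  have hl53 : ((72801/10000):ℝ) ≤ Real.sqrt 53 := sqrtLB _ _ (by norm_num) (by norm_num)
  simp only [VR, eeR, eeQ]
  norm_num
  linarith

lemma case_55 : driftIneq 55 := by
  have c1 : cstep 55 1 = 83 := cstep_eq _ _ 1 _ (by norm_num) (by norm_num)
  have c3 : cstep 55 3 = 21 := cstep_eq _ _ 3 _ (by norm_num) (by norm_num)
  have c5 : cstep 55 5 = 85 := cstep_eq _ _ 1 _ (by norm_num) (by norm_num)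
  have c7 : cstep 55 7 = 43 := cstep_eq _ _ 2 _ (by norm_num) (by norm_num)
  rw [driftIneq, c1, c3, c5, c7]
  have hu21 : Real.sqrt 21 ≤ (229129/50000) := sqrtUB _ _ (by norm_num) (by norm_num)
  have hu43 : Real.sqrt 43 ≤ (20492/3125) := sqrtUB _ _ (by norm_num) (by norm_num)
  have hu83 : Real.sqrt 83 ≤ (227761/25000) := sqrtUB _ _ (by norm_num) (by norm_num)
  have hu85 : Real.sqrt 85 ≤ (184391/20000) := sqrtUB _ _ (by norm_num) (by norm_num)
  have hl55 : ((741619/100000):ℝ) ≤ Real.sqrt 55 := sqrtLB _ _ (by norm_num) (by norm_num)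
  simp only [VR, eeR, eeQ]
  norm_num
  linarith

lemma case_57 : driftIneq 57 := by
  have c1 : cstep 57 1 = 43 := cstep_eq _ _ 2 _ (by norm_num) (by norm_num)
  have c3 : cstep 57 3 = 87 := cstep_eq _ _ 1 _ (by norm_num) (by norm_num)
  have c5 : cstep 57 5 = 11 := cstep_eq _ _ 4 _ (by norm_num) (by norm_num)
  have c7 : cstep 57 7 = 89 := cstep_eq _ _ 1 _ (by norm_num) (by norm_num)
  rw [driftIneq, c1, c3, c5, c7]
  have hu11 : Real.sqrt 11 ≤ (331663/100000) := sqrtUB _ _ (by norm_num) (by norm_num)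
  have hu43 : Real.sqrt 43 ≤ (20492/3125) := sqrtUB _ _ (by norm_num) (by norm_num)
  have hu87 : Real.sqrt 87 ≤ (466369/50000) := sqrtUB _ _ (by norm_num) (by norm_num)
  have hu89 : Real.sqrt 89 ≤ (943399/100000) := sqrtUB _ _ (by norm_num) (by norm_num)
  have hl57 : ((754983/100000):ℝ) ≤ Real.sqrt 57 := sqrtLB _ _ (by norm_num) (by norm_num)
  simp only [VR, eeR, eeQ]
  norm_num
  linarith

lemma case_59 : driftIneq 59 := by
  have c1 : cstep 59 1 = 89 := cstep_eq _ _ 1 _ (by norm_num) (by norm_num)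
  have c3 : cstep 59 3 = 45 := cstep_eq _ _ 2 _ (by norm_num) (by norm_num)
  have c5 : cstep 59 5 = 91 := cstep_eq _ _ 1 _ (by norm_num) (by norm_num)
  have c7 : cstep 59 7 = 23 := cstep_eq _ _ 3 _ (by norm_num) (by norm_num)
  rw [driftIneq, c1, c3, c5, c7]
  have hu23 : Real.sqrt 23 ≤ (14987/3125) := sqrtUB _ _ (by norm_num) (by norm_num)
  have hu45 : Real.sqrt 45 ≤ (670821/100000) := sqrtUB _ _ (by norm_num) (by norm_num)
  have hu89 : Real.sqrt 89 ≤ (943399/100000) := sqrtUB _ _ (by norm_num) (by norm_num)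
  have hu91 : Real.sqrt 91 ≤ (47697/5000) := sqrtUB _ _ (by norm_num) (by norm_num)
  have hl59 : ((384057/50000):ℝ) ≤ Real.sqrt 59 := sqrtLB _ _ (by norm_num) (by norm_num)
  simp only [VR, eeR, eeQ]
  norm_num
  linarith

lemma case_61 : driftIneq 61 := by
  have c1 : cstep 61 1 = 23 := cstep_eq _ _ 3 _ (by norm_num) (by norm_num)
  have c3 : cstep 61 3 = 93 := cstep_eq _ _ 1 _ (by norm_num) (by norm_num)
  have c5 : cstep 61 5 = 47 := cstep_eq _ _ 2 _ (by norm_num) (by norm_num)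
  have c7 : cstep 61 7 = 95 := cstep_eq _ _ 1 _ (by norm_num) (by norm_num)
  rw [driftIneq, c1, c3, c5, c7]
  have hu23 : Real.sqrt 23 ≤ (14987/3125) := sqrtUB _ _ (by norm_num) (by norm_num)
  have hu47 : Real.sqrt 47 ≤ (342783/50000) := sqrtUB _ _ (by norm_num) (by norm_num)
  have hu93 : Real.sqrt 93 ≤ (482183/50000) := sqrtUB _ _ (by norm_num) (by norm_num)
  have hu95 : Real.sqrt 95 ≤ (24367/2500) := sqrtUB _ _ (by norm_num) (by norm_num)
  have hl61 : ((24407/3125):ℝ) ≤ Real.sqrt 61 := sqrtLB _ _ (by norm_num) (by norm_num)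
  simp only [VR, eeR, eeQ]
  norm_num
  linarith

lemma case_63 : driftIneq 63 := by
  have c1 : cstep 63 1 = 95 := cstep_eq _ _ 1 _ (by norm_num) (by norm_num)
  have c3 : cstep 63 3 = 3 := cstep_eq _ _ 6 _ (by norm_num) (by norm_num)
  have c5 : cstep 63 5 = 97 := cstep_eq _ _ 1 _ (by norm_num) (by norm_num)
  have c7 : cstep 63 7 = 49 := cstep_eq _ _ 2 _ (by norm_num) (by norm_num)
  rw [driftIneq, c1, c3, c5, c7]
  have hu3 : Real.sqrt 3 ≤ (86603/50000) := sqrtUB _ _ (by norm_num) (by norm_num)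
  have hu49 : Real.sqrt 49 ≤ 7 := sqrtUB _ _ (by norm_num) (by norm_num)
  have hu95 : Real.sqrt 95 ≤ (24367/2500) := sqrtUB _ _ (by norm_num) (by norm_num)
  have hu97 : Real.sqrt 97 ≤ (492443/50000) := sqrtUB _ _ (by norm_num) (by norm_num)
  have hl63 : ((31749/4000):ℝ) ≤ Real.sqrt 63 := sqrtLB _ _ (by norm_num) (by norm_num)
  simp only [VR, eeR, eeQ]
  norm_num
  linarith

lemma case_65 : driftIneq 65 := by
  have c1 : cstep 65 1 = 49 := cstep_eq _ _ 2 _ (by norm_num) (by norm_num)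
  have c3 : cstep 65 3 = 99 := cstep_eq _ _ 1 _ (by norm_num) (by norm_num)
  have c5 : cstep 65 5 = 25 := cstep_eq _ _ 3 _ (by norm_num) (by norm_num)
  have c7 : cstep 65 7 = 101 := cstep_eq _ _ 1 _ (by norm_num) (by norm_num)
  rw [driftIneq, c1, c3, c5, c7]
  have hu25 : Real.sqrt 25 ≤ 5 := sqrtUB _ _ (by norm_num) (by norm_num)
  have hu49 : Real.sqrt 49 ≤ 7 := sqrtUB _ _ (by norm_num) (by norm_num)
  have hu99 : Real.sqrt 99 ≤ (248747/25000) := sqrtUB _ _ (by norm_num) (by norm_num)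
  have hu101 : Real.sqrt 101 ≤ (251247/25000) := sqrtUB _ _ (by norm_num) (by norm_num)
  have hl65 : ((32249/4000):ℝ) ≤ Real.sqrt 65 := sqrtLB _ _ (by norm_num) (by norm_num)
  simp only [VR, eeR, eeQ]
  norm_num
  linarith

lemma case_67 : driftIneq 67 := by
  have c1 : cstep 67 1 = 101 := cstep_eq _ _ 1 _ (by norm_num) (by norm_num)
  have c3 : cstep 67 3 = 51 := cstep_eq _ _ 2 _ (by norm_num) (by norm_num)
  have c5 : cstep 67 5 = 103 := cstep_eq _ _ 1 _ (by norm_num) (by norm_num)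
  have c7 : cstep 67 7 = 13 := cstep_eq _ _ 4 _ (by norm_num) (by norm_num)
  rw [driftIneq, c1, c3, c5, c7]
  have hu13 : Real.sqrt 13 ≤ (90139/25000) := sqrtUB _ _ (by norm_num) (by norm_num)
  have hu51 : Real.sqrt 51 ≤ (714143/100000) := sqrtUB _ _ (by norm_num) (by norm_num)
  have hu101 : Real.sqrt 101 ≤ (251247/25000) := sqrtUB _ _ (by norm_num) (by norm_num)
  have hu103 : Real.sqrt 103 ≤ (101489/10000) := sqrtUB _ _ (by norm_num) (by norm_num)
  have hl67 : ((163707/20000):ℝ) ≤ Real.sqrt 67 := sqrtLB _ _ (by norm_num) (by norm_num)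
  simp only [VR, eeR, eeQ]
  norm_num
  linarith

lemma case_69 : driftIneq 69 := by
  have c1 : cstep 69 1 = 13 := cstep_eq _ _ 4 _ (by norm_num) (by norm_num)
  have c3 : cstep 69 3 = 105 := cstep_eq _ _ 1 _ (by norm_num) (by norm_num)
  have c5 : cstep 69 5 = 53 := cstep_eq _ _ 2 _ (by norm_num) (by norm_num)
  have c7 : cstep 69 7 = 107 := cstep_eq _ _ 1 _ (by norm_num) (by norm_num)
  rw [driftIneq, c1, c3, c5, c7]
  have hu13 : Real.sqrt 13 ≤ (90139/25000) := sqrtUB _ _ (by norm_num) (by norm_num)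
  have hu53 : Real.sqrt 53 ≤ (728011/100000) := sqrtUB _ _ (by norm_num) (by norm_num)
  have hu105 : Real.sqrt 105 ≤ (128087/12500) := sqrtUB _ _ (by norm_num) (by norm_num)
  have hu107 : Real.sqrt 107 ≤ (1034409/100000) := sqrtUB _ _ (by norm_num) (by norm_num)
  have hl69 : ((415331/50000):ℝ) ≤ Real.sqrt 69 := sqrtLB _ _ (by norm_num) (by norm_num)
  simp only [VR, eeR, eeQ]
  norm_num
  linarith

lemma case_71 : driftIneq 71 := by
  have c1 : cstep 71 1 = 107 := cstep_eq _ _ 1 _ (by norm_num) (by norm_num)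
  have c3 : cstep 71 3 = 27 := cstep_eq _ _ 3 _ (by norm_num) (by norm_num)
  have c5 : cstep 71 5 = 109 := cstep_eq _ _ 1 _ (by norm_num) (by norm_num)
  have c7 : cstep 71 7 = 55 := cstep_eq _ _ 2 _ (by norm_num) (by norm_num)
  rw [driftIneq, c1, c3, c5, c7]
  have hu27 : Real.sqrt 27 ≤ (16238/3125) := sqrtUB _ _ (by norm_num) (by norm_num)
  have hu55 : Real.sqrt 55 ≤ (37081/5000) := sqrtUB _ _ (by norm_num) (by norm_num)
  have hu107 : Real.sqrt 107 ≤ (1034409/100000) := sqrtUB _ _ (by norm_num) (by norm_num)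
  have hu109 : Real.sqrt 109 ≤ (1044031/100000) := sqrtUB _ _ (by norm_num) (by norm_num)
  have hl71 : ((421307/50000):ℝ) ≤ Real.sqrt 71 := sqrtLB _ _ (by norm_num) (by norm_num)
  simp only [VR, eeR, eeQ]
  norm_num
  linarith

lemma case_73 : driftIneq 73 := by
  have c1 : cstep 73 1 = 55 := cstep_eq _ _ 2 _ (by norm_num) (by norm_num)
  have c3 : cstep 73 3 = 111 := cstep_eq _ _ 1 _ (by norm_num) (by norm_num)
  have c5 : cstep 73 5 = 7 := cstep_eq _ _ 5 _ (by norm_num) (by norm_num)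
  have c7 : cstep 73 7 = 113 := cstep_eq _ _ 1 _ (by norm_num) (by norm_num)
  rw [driftIneq, c1, c3, c5, c7]
  have hu7 : Real.sqrt 7 ≤ (8268/3125) := sqrtUB _ _ (by norm_num) (by norm_num)
  have hu55 : Real.sqrt 55 ≤ (37081/5000) := sqrtUB _ _ (by norm_num) (by norm_num)
  have hu111 : Real.sqrt 111 ≤ (526783/50000) := sqrtUB _ _ (by norm_num) (by norm_num)
  have hu113 : Real.sqrt 113 ≤ (212603/20000) := sqrtUB _ _ (by norm_num) (by norm_num)
  have hl73 : ((1068/125):ℝ) ≤ Real.sqrt 73 := sqrtLB _ _ (by norm_num) (by norm_num)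
  simp only [VR, eeR, eeQ]
  norm_num
  linarith

lemma case_75 : driftIneq 75 := by
  have c1 : cstep 75 1 = 113 := cstep_eq _ _ 1 _ (by norm_num) (by norm_num)
  have c3 : cstep 75 3 = 57 := cstep_eq _ _ 2 _ (by norm_num) (by norm_num)
  have c5 : cstep 75 5 = 115 := cstep_eq _ _ 1 _ (by norm_num) (by norm_num)
  have c7 : cstep 75 7 = 29 := cstep_eq _ _ 3 _ (by norm_num) (by norm_num)
  rw [driftIneq, c1, c3, c5, c7]
  have hu29 : Real.sqrt 29 ≤ (538517/100000) := sqrtUB _ _ (by norm_num) (by norm_num)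
  have hu57 : Real.sqrt 57 ≤ (94373/12500) := sqrtUB _ _ (by norm_num) (by norm_num)
  have hu113 : Real.sqrt 113 ≤ (212603/20000) := sqrtUB _ _ (by norm_num) (by norm_num)
  have hu115 : Real.sqrt 115 ≤ (1072381/100000) := sqrtUB _ _ (by norm_num) (by norm_num)
  have hl75 : ((34641/4000):ℝ) ≤ Real.sqrt 75 := sqrtLB _ _ (by norm_num) (by norm_num)
  simp only [VR, eeR, eeQ]
  norm_num
  linarith

lemma case_77 : driftIneq 77 := by
  have c1 : cstep 77 1 = 29 := cstep_eq _ _ 3 _ (by norm_num) (by norm_num)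
  have c3 : cstep 77 3 = 117 := cstep_eq _ _ 1 _ (by norm_num) (by norm_num)
  have c5 : cstep 77 5 = 59 := cstep_eq _ _ 2 _ (by norm_num) (by norm_num)
  have c7 : cstep 77 7 = 119 := cstep_eq _ _ 1 _ (by norm_num) (by norm_num)
  rw [driftIneq, c1, c3, c5, c7]
  have hu29 : Real.sqrt 29 ≤ (538517/100000) := sqrtUB _ _ (by norm_num) (by norm_num)
  have hu59 : Real.sqrt 59 ≤ (153623/20000) := sqrtUB _ _ (by norm_num) (by norm_num)
  have hu117 : Real.sqrt 117 ≤ (540833/50000) := sqrtUB _ _ (by norm_num) (by norm_num)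
  have hu119 : Real.sqrt 119 ≤ (136359/12500) := sqrtUB _ _ (by norm_num) (by norm_num)
  have hl77 : ((109687/12500):ℝ) ≤ Real.sqrt 77 := sqrtLB _ _ (by norm_num) (by norm_num)
  simp only [VR, eeR, eeQ]
  norm_num
  linarith

lemma case_79 : driftIneq 79 := by
  have c1 : cstep 79 1 = 119 := cstep_eq _ _ 1 _ (by norm_num) (by norm_num)
  have c3 : cstep 79 3 = 15 := cstep_eq _ _ 4 _ (by norm_num) (by norm_num)
  have c5 : cstep 79 5 = 121 := cstep_eq _ _ 1 _ (by norm_num) (by norm_num)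
  have c7 : cstep 79 7 = 61 := cstep_eq _ _ 2 _ (by norm_num) (by norm_num)
  rw [driftIneq, c1, c3, c5, c7]
  have hu15 : Real.sqrt 15 ≤ (387299/100000) := sqrtUB _ _ (by norm_num) (by norm_num)
  have hu61 : Real.sqrt 61 ≤ (31241/4000) := sqrtUB _ _ (by norm_num) (by norm_num)
  have hu119 : Real.sqrt 119 ≤ (136359/12500) := sqrtUB _ _ (by norm_num) (by norm_num)
  have hu121 : Real.sqrt 121 ≤ 11 := sqrtUB _ _ (by norm_num) (by norm_num)
  have hl79 : ((888819/100000):ℝ) ≤ Real.sqrt 79 := sqrtLB _ _ (by norm_num) (by norm_num)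
  simp only [VR, eeR, eeQ]
  norm_num
  linarith

lemma case_81 : driftIneq 81 := by
  have c1 : cstep 81 1 = 61 := cstep_eq _ _ 2 _ (by norm_num) (by norm_num)
  have c3 : cstep 81 3 = 123 := cstep_eq _ _ 1 _ (by norm_num) (by norm_num)
  have c5 : cstep 81 5 = 31 := cstep_eq _ _ 3 _ (by norm_num) (by norm_num)
  have c7 : cstep 81 7 = 125 := cstep_eq _ _ 1 _ (by norm_num) (by norm_num)
  rw [driftIneq, c1, c3, c5, c7]
  have hu31 : Real.sqrt 31 ≤ (556777/100000) := sqrtUB _ _ (by norm_num) (by norm_num)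
  have hu61 : Real.sqrt 61 ≤ (31241/4000) := sqrtUB _ _ (by norm_num) (by norm_num)
  have hu123 : Real.sqrt 123 ≤ (554527/50000) := sqrtUB _ _ (by norm_num) (by norm_num)
  have hu125 : Real.sqrt 125 ≤ (559017/50000) := sqrtUB _ _ (by norm_num) (by norm_num)
  have hl81 : (9:ℝ) ≤ Real.sqrt 81 := sqrtLB _ _ (by norm_num) (by norm_num)
  simp only [VR, eeR, eeQ]
  norm_num
  linarith

lemma case_83 : driftIneq 83 := by
  have c1 : cstep 83 1 = 125 := cstep_eq _ _ 1 _ (by norm_num) (by norm_num)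
  have c3 : cstep 83 3 = 63 := cstep_eq _ _ 2 _ (by norm_num) (by norm_num)
  have c5 : cstep 83 5 = 127 := cstep_eq _ _ 1 _ (by norm_num) (by norm_num)
  have c7 : cstep 83 7 = 1 := cstep_eq _ _ 8 _ (by norm_num) (by norm_num)
  rw [driftIneq, c1, c3, c5, c7]
  have hu63 : Real.sqrt 63 ≤ (396863/50000) := sqrtUB _ _ (by norm_num) (by norm_num)
  have hu125 : Real.sqrt 125 ≤ (559017/50000) := sqrtUB _ _ (by norm_num) (by norm_num)
  have hu127 : Real.sqrt 127 ≤ (1126943/100000) := sqrtUB _ _ (by norm_num) (by norm_num)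
  have hl83 : ((911043/100000):ℝ) ≤ Real.sqrt 83 := sqrtLB _ _ (by norm_num) (by norm_num)
  simp only [VR, eeR, eeQ]
  norm_num
  linarith

lemma case_85 : driftIneq 85 := by
  have c1 : cstep 85 1 = 1 := cstep_eq _ _ 8 _ (by norm_num) (by norm_num)
  have c3 : cstep 85 3 = 129 := cstep_eq _ _ 1 _ (by norm_num) (by norm_num)
  have c5 : cstep 85 5 = 65 := cstep_eq _ _ 2 _ (by norm_num) (by norm_num)
  have c7 : cstep 85 7 = 131 := cstep_eq _ _ 1 _ (by norm_num) (by norm_num)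
  rw [driftIneq, c1, c3, c5, c7]
  have hu65 : Real.sqrt 65 ≤ (403113/50000) := sqrtUB _ _ (by norm_num) (by norm_num)
  have hu129 : Real.sqrt 129 ≤ (567891/50000) := sqrtUB _ _ (by norm_num) (by norm_num)
  have hu131 : Real.sqrt 131 ≤ (1144553/100000) := sqrtUB _ _ (by norm_num) (by norm_num)
  have hl85 : ((460977/50000):ℝ) ≤ Real.sqrt 85 := sqrtLB _ _ (by norm_num) (by norm_num)
  simp only [VR, eeR, eeQ]
  norm_num
  linarith

lemma case_87 : driftIneq 87 := by
  have c1 : cstep 87 1 = 131 := cstep_eq _ _ 1 _ (by norm_num) (by norm_num)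
  have c3 : cstep 87 3 = 33 := cstep_eq _ _ 3 _ (by norm_num) (by norm_num)
  have c5 : cstep 87 5 = 133 := cstep_eq _ _ 1 _ (by norm_num) (by norm_num)
  have c7 : cstep 87 7 = 67 := cstep_eq _ _ 2 _ (by norm_num) (by norm_num)
  rw [driftIneq, c1, c3, c5, c7]
  have hu33 : Real.sqrt 33 ≤ (574457/100000) := sqrtUB _ _ (by norm_num) (by norm_num)
  have hu67 : Real.sqrt 67 ≤ (102317/12500) := sqrtUB _ _ (by norm_num) (by norm_num)
  have hu131 : Real.sqrt 131 ≤ (1144553/100000) := sqrtUB _ _ (by norm_num) (by norm_num)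
  have hu133 : Real.sqrt 133 ≤ (1153257/100000) := sqrtUB _ _ (by norm_num) (by norm_num)
  have hl87 : ((932737/100000):ℝ) ≤ Real.sqrt 87 := sqrtLB _ _ (by norm_num) (by norm_num)
  simp only [VR, eeR, eeQ]
  norm_num
  linarith

lemma case_89 : driftIneq 89 := by
  have c1 : cstep 89 1 = 67 := cstep_eq _ _ 2 _ (by norm_num) (by norm_num)
  have c3 : cstep 89 3 = 135 := cstep_eq _ _ 1 _ (by norm_num) (by norm_num)
  have c5 : cstep 89 5 = 17 := cstep_eq _ _ 4 _ (by norm_num) (by norm_num)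
  have c7 : cstep 89 7 = 137 := cstep_eq _ _ 1 _ (by norm_num) (by norm_num)
  rw [driftIneq, c1, c3, c5, c7]
  have hu17 : Real.sqrt 17 ≤ (412311/100000) := sqrtUB _ _ (by norm_num) (by norm_num)
  have hu67 : Real.sqrt 67 ≤ (102317/12500) := sqrtUB _ _ (by norm_num) (by norm_num)
  have hu135 : Real.sqrt 135 ≤ (145237/12500) := sqrtUB _ _ (by norm_num) (by norm_num)
  have hu137 : Real.sqrt 137 ≤ (117047/10000) := sqrtUB _ _ (by norm_num) (by norm_num)
  have hl89 : ((471699/50000):ℝ) ≤ Real.sqrt 89 := sqrtLB _ _ (by norm_num) (by norm_num)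
  simp only [VR, eeR, eeQ]
  norm_num
  linarith

lemma case_91 : driftIneq 91 := by
  have c1 : cstep 91 1 = 137 := cstep_eq _ _ 1 _ (by norm_num) (by norm_num)
  have c3 : cstep 91 3 = 69 := cstep_eq _ _ 2 _ (by norm_num) (by norm_num)
  have c5 : cstep 91 5 = 139 := cstep_eq _ _ 1 _ (by norm_num) (by norm_num)
  have c7 : cstep 91 7 = 35 := cstep_eq _ _ 3 _ (by norm_num) (by norm_num)
  rw [driftIneq, c1, c3, c5, c7]
  have hu35 : Real.sqrt 35 ≤ (73951/12500) := sqrtUB _ _ (by norm_num) (by norm_num)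
  have hu69 : Real.sqrt 69 ≤ (830663/100000) := sqrtUB _ _ (by norm_num) (by norm_num)
  have hu137 : Real.sqrt 137 ≤ (117047/10000) := sqrtUB _ _ (by norm_num) (by norm_num)
  have hu139 : Real.sqrt 139 ≤ (1178983/100000) := sqrtUB _ _ (by norm_num) (by norm_num)
  have hl91 : ((953939/100000):ℝ) ≤ Real.sqrt 91 := sqrtLB _ _ (by norm_num) (by norm_num)
  simp only [VR, eeR, eeQ]
  norm_num
  linarith

lemma case_93 : driftIneq 93 := by
  have c1 : cstep 93 1 = 35 := cstep_eq _ _ 3 _ (by norm_num) (by norm_num)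
  have c3 : cstep 93 3 = 141 := cstep_eq _ _ 1 _ (by norm_num) (by norm_num)
  have c5 : cstep 93 5 = 71 := cstep_eq _ _ 2 _ (by norm_num) (by norm_num)
  have c7 : cstep 93 7 = 143 := cstep_eq _ _ 1 _ (by norm_num) (by norm_num)
  rw [driftIneq, c1, c3, c5, c7]
  have hu35 : Real.sqrt 35 ≤ (73951/12500) := sqrtUB _ _ (by norm_num) (by norm_num)
  have hu71 : Real.sqrt 71 ≤ (168523/20000) := sqrtUB _ _ (by norm_num) (by norm_num)
  have hu141 : Real.sqrt 141 ≤ (237487/20000) := sqrtUB _ _ (by norm_num) (by norm_num)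
  have hu143 : Real.sqrt 143 ≤ (1195827/100000) := sqrtUB _ _ (by norm_num) (by norm_num)
  have hl93 : ((192873/20000):ℝ) ≤ Real.sqrt 93 := sqrtLB _ _ (by norm_num) (by norm_num)
  simp only [VR, eeR, eeQ]
  norm_num
  linarith

lemma case_95 : driftIneq 95 := by
  have c1 : cstep 95 1 = 143 := cstep_eq _ _ 1 _ (by norm_num) (by norm_num)
  have c3 : cstep 95 3 = 9 := cstep_eq _ _ 5 _ (by norm_num) (by norm_num)
  have c5 : cstep 95 5 = 145 := cstep_eq _ _ 1 _ (by norm_num) (by norm_num)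
  have c7 : cstep 95 7 = 73 := cstep_eq _ _ 2 _ (by norm_num) (by norm_num)
  rw [driftIneq, c1, c3, c5, c7]
  have hu9 : Real.sqrt 9 ≤ 3 := sqrtUB _ _ (by norm_num) (by norm_num)
  have hu73 : Real.sqrt 73 ≤ (854401/100000) := sqrtUB _ _ (by norm_num) (by norm_num)
  have hu143 : Real.sqrt 143 ≤ (1195827/100000) := sqrtUB _ _ (by norm_num) (by norm_num)
  have hu145 : Real.sqrt 145 ≤ (7526/625) := sqrtUB _ _ (by norm_num) (by norm_num)
  have hl95 : ((974679/100000):ℝ) ≤ Real.sqrt 95 := sqrtLB _ _ (by norm_num) (by norm_num)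
  simp only [VR, eeR, eeQ]
  norm_num
  linarith

lemma case_97 : driftIneq 97 := by
  have c1 : cstep 97 1 = 73 := cstep_eq _ _ 2 _ (by norm_num) (by norm_num)
  have c3 : cstep 97 3 = 147 := cstep_eq _ _ 1 _ (by norm_num) (by norm_num)
  have c5 : cstep 97 5 = 37 := cstep_eq _ _ 3 _ (by norm_num) (by norm_num)
  have c7 : cstep 97 7 = 149 := cstep_eq _ _ 1 _ (by norm_num) (by norm_num)
  rw [driftIneq, c1, c3, c5, c7]
  have hu37 : Real.sqrt 37 ≤ (608277/100000) := sqrtUB _ _ (by norm_num) (by norm_num)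
  have hu73 : Real.sqrt 73 ≤ (854401/100000) := sqrtUB _ _ (by norm_num) (by norm_num)
  have hu147 : Real.sqrt 147 ≤ (303109/25000) := sqrtUB _ _ (by norm_num) (by norm_num)
  have hu149 : Real.sqrt 149 ≤ (76291/6250) := sqrtUB _ _ (by norm_num) (by norm_num)
  have hl97 : ((196977/20000):ℝ) ≤ Real.sqrt 97 := sqrtLB _ _ (by norm_num) (by norm_num)
  simp only [VR, eeR, eeQ]
  norm_num
  linarith

lemma case_99 : driftIneq 99 := by
  have c1 : cstep 99 1 = 149 := cstep_eq _ _ 1 _ (by norm_num) (by norm_num)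
  have c3 : cstep 99 3 = 75 := cstep_eq _ _ 2 _ (by norm_num) (by norm_num)
  have c5 : cstep 99 5 = 151 := cstep_eq _ _ 1 _ (by norm_num) (by norm_num)
  have c7 : cstep 99 7 = 19 := cstep_eq _ _ 4 _ (by norm_num) (by norm_num)
  rw [driftIneq, c1, c3, c5, c7]
  have hu19 : Real.sqrt 19 ≤ (43589/10000) := sqrtUB _ _ (by norm_num) (by norm_num)
  have hu75 : Real.sqrt 75 ≤ (433013/50000) := sqrtUB _ _ (by norm_num) (by norm_num)
  have hu149 : Real.sqrt 149 ≤ (76291/6250) := sqrtUB _ _ (by norm_num) (by norm_num)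
  have hu151 : Real.sqrt 151 ≤ (1228821/100000) := sqrtUB _ _ (by norm_num) (by norm_num)
  have hl99 : ((994987/100000):ℝ) ≤ Real.sqrt 99 := sqrtLB _ _ (by norm_num) (by norm_num)
  simp only [VR, eeR, eeQ]
  norm_num
  linarith

lemma case_101 : driftIneq 101 := by
  have c1 : cstep 101 1 = 19 := cstep_eq _ _ 4 _ (by norm_num) (by norm_num)
  have c3 : cstep 101 3 = 153 := cstep_eq _ _ 1 _ (by norm_num) (by norm_num)
  have c5 : cstep 101 5 = 77 := cstep_eq _ _ 2 _ (by norm_num) (by norm_num)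
  have c7 : cstep 101 7 = 155 := cstep_eq _ _ 1 _ (by norm_num) (by norm_num)
  rw [driftIneq, c1, c3, c5, c7]
  have hu19 : Real.sqrt 19 ≤ (43589/10000) := sqrtUB _ _ (by norm_num) (by norm_num)
  have hu77 : Real.sqrt 77 ≤ (877497/100000) := sqrtUB _ _ (by norm_num) (by norm_num)
  have hu153 : Real.sqrt 153 ≤ (309233/25000) := sqrtUB _ _ (by norm_num) (by norm_num)
  have hu155 : Real.sqrt 155 ≤ (124499/10000) := sqrtUB _ _ (by norm_num) (by norm_num)
  have hl101 : ((1004987/100000):ℝ) ≤ Real.sqrt 101 := sqrtLB _ _ (by norm_num) (by norm_num)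
  simp only [VR, eeR, eeQ]
  norm_num
  linarith

lemma case_103 : driftIneq 103 := by
  have c1 : cstep 103 1 = 155 := cstep_eq _ _ 1 _ (by norm_num) (by norm_num)
  have c3 : cstep 103 3 = 39 := cstep_eq _ _ 3 _ (by norm_num) (by norm_num)
  have c5 : cstep 103 5 = 157 := cstep_eq _ _ 1 _ (by norm_num) (by norm_num)
  have c7 : cstep 103 7 = 79 := cstep_eq _ _ 2 _ (by norm_num) (by norm_num)
  rw [driftIneq, c1, c3, c5, c7]
  have hu39 : Real.sqrt 39 ≤ (1249/200) := sqrtUB _ _ (by norm_num) (by norm_num)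
  have hu79 : Real.sqrt 79 ≤ (44441/5000) := sqrtUB _ _ (by norm_num) (by norm_num)
  have hu155 : Real.sqrt 155 ≤ (124499/10000) := sqrtUB _ _ (by norm_num) (by norm_num)
  have hu157 : Real.sqrt 157 ≤ (1252997/100000) := sqrtUB _ _ (by norm_num) (by norm_num)
  have hl103 : ((1014889/100000):ℝ) ≤ Real.sqrt 103 := sqrtLB _ _ (by norm_num) (by norm_num)
  simp only [VR, eeR, eeQ]
  norm_num
  linarith

lemma case_105 : driftIneq 105 := by
  have c1 : cstep 105 1 = 79 := cstep_eq _ _ 2 _ (by norm_num) (by norm_num)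
  have c3 : cstep 105 3 = 159 := cstep_eq _ _ 1 _ (by norm_num) (by norm_num)
  have c5 : cstep 105 5 = 5 := cstep_eq _ _ 6 _ (by norm_num) (by norm_num)
  have c7 : cstep 105 7 = 161 := cstep_eq _ _ 1 _ (by norm_num) (by norm_num)
  rw [driftIneq, c1, c3, c5, c7]
  have hu5 : Real.sqrt 5 ≤ (223607/100000) := sqrtUB _ _ (by norm_num) (by norm_num)
  have hu79 : Real.sqrt 79 ≤ (44441/5000) := sqrtUB _ _ (by norm_num) (by norm_num)
  have hu159 : Real.sqrt 159 ≤ (1260953/100000) := sqrtUB _ _ (by norm_num) (by norm_num)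
  have hu161 : Real.sqrt 161 ≤ (634429/50000) := sqrtUB _ _ (by norm_num) (by norm_num)
  have hl105 : ((204939/20000):ℝ) ≤ Real.sqrt 105 := sqrtLB _ _ (by norm_num) (by norm_num)
  simp only [VR, eeR, eeQ]
  norm_num
  linarith

lemma case_107 : driftIneq 107 := by
  have c1 : cstep 107 1 = 161 := cstep_eq _ _ 1 _ (by norm_num) (by norm_num)
  have c3 : cstep 107 3 = 81 := cstep_eq _ _ 2 _ (by norm_num) (by norm_num)
  have c5 : cstep 107 5 = 163 := cstep_eq _ _ 1 _ (by norm_num) (by norm_num)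
  have c7 : cstep 107 7 = 41 := cstep_eq _ _ 3 _ (by norm_num) (by norm_num)
  rw [driftIneq, c1, c3, c5, c7]
  have hu41 : Real.sqrt 41 ≤ (640313/100000) := sqrtUB _ _ (by norm_num) (by norm_num)
  have hu81 : Real.sqrt 81 ≤ 9 := sqrtUB _ _ (by norm_num) (by norm_num)
  have hu161 : Real.sqrt 161 ≤ (634429/50000) := sqrtUB _ _ (by norm_num) (by norm_num)
  have hu163 : Real.sqrt 163 ≤ (255343/20000) := sqrtUB _ _ (by norm_num) (by norm_num)
  have hl107 : ((129301/12500):ℝ) ≤ Real.sqrt 107 := sqrtLB _ _ (by norm_num) (by norm_num)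
  simp only [VR, eeR, eeQ]
  norm_num
  linarith

lemma case_109 : driftIneq 109 := by
  have c1 : cstep 109 1 = 41 := cstep_eq _ _ 3 _ (by norm_num) (by norm_num)
  have c3 : cstep 109 3 = 165 := cstep_eq _ _ 1 _ (by norm_num) (by norm_num)
  have c5 : cstep 109 5 = 83 := cstep_eq _ _ 2 _ (by norm_num) (by norm_num)
  have c7 : cstep 109 7 = 167 := cstep_eq _ _ 1 _ (by norm_num) (by norm_num)
  rw [driftIneq, c1, c3, c5, c7]
  have hu41 : Real.sqrt 41 ≤ (640313/100000) := sqrtUB _ _ (by norm_num) (by norm_num)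
  have hu83 : Real.sqrt 83 ≤ (227761/25000) := sqrtUB _ _ (by norm_num) (by norm_num)
  have hu165 : Real.sqrt 165 ≤ (321131/25000) := sqrtUB _ _ (by norm_num) (by norm_num)
  have hu167 : Real.sqrt 167 ≤ (258457/20000) := sqrtUB _ _ (by norm_num) (by norm_num)
  have hl109 : ((104403/10000):ℝ) ≤ Real.sqrt 109 := sqrtLB _ _ (by norm_num) (by norm_num)
  simp only [VR, eeR, eeQ]
  norm_num
  linarith

lemma case_111 : driftIneq 111 := by
  have c1 : cstep 111 1 = 167 := cstep_eq _ _ 1 _ (by norm_num) (by norm_num)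
  have c3 : cstep 111 3 = 21 := cstep_eq _ _ 4 _ (by norm_num) (by norm_num)
  have c5 : cstep 111 5 = 169 := cstep_eq _ _ 1 _ (by norm_num) (by norm_num)
  have c7 : cstep 111 7 = 85 := cstep_eq _ _ 2 _ (by norm_num) (by norm_num)
  rw [driftIneq, c1, c3, c5, c7]
  have hu21 : Real.sqrt 21 ≤ (229129/50000) := sqrtUB _ _ (by norm_num) (by norm_num)
  have hu85 : Real.sqrt 85 ≤ (184391/20000) := sqrtUB _ _ (by norm_num) (by norm_num)
  have hu167 : Real.sqrt 167 ≤ (258457/20000) := sqrtUB _ _ (by norm_num) (by norm_num)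
  have hu169 : Real.sqrt 169 ≤ 13 := sqrtUB _ _ (by norm_num) (by norm_num)
  have hl111 : ((210713/20000):ℝ) ≤ Real.sqrt 111 := sqrtLB _ _ (by norm_num) (by norm_num)
  simp only [VR, eeR, eeQ]
  norm_num
  linarith

lemma case_113 : driftIneq 113 := by
  have c1 : cstep 113 1 = 85 := cstep_eq _ _ 2 _ (by norm_num) (by norm_num)
  have c3 : cstep 113 3 = 171 := cstep_eq _ _ 1 _ (by norm_num) (by norm_num)
  have c5 : cstep 113 5 = 43 := cstep_eq _ _ 3 _ (by norm_num) (by norm_num)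
  have c7 : cstep 113 7 = 173 := cstep_eq _ _ 1 _ (by norm_num) (by norm_num)
  rw [driftIneq, c1, c3, c5, c7]
  have hu43 : Real.sqrt 43 ≤ (20492/3125) := sqrtUB _ _ (by norm_num) (by norm_num)
  have hu85 : Real.sqrt 85 ≤ (184391/20000) := sqrtUB _ _ (by norm_num) (by norm_num)
  have hu171 : Real.sqrt 171 ≤ (130767/10000) := sqrtUB _ _ (by norm_num) (by norm_num)
  have hu173 : Real.sqrt 173 ≤ (263059/20000) := sqrtUB _ _ (by norm_num) (by norm_num)
  have hl113 : ((531507/50000):ℝ) ≤ Real.sqrt 113 := sqrtLB _ _ (by norm_num) (by norm_num)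
  simp only [VR, eeR, eeQ]
  norm_num
  linarith

lemma case_115 : driftIneq 115 := by
  have c1 : cstep 115 1 = 173 := cstep_eq _ _ 1 _ (by norm_num) (by norm_num)
  have c3 : cstep 115 3 = 87 := cstep_eq _ _ 2 _ (by norm_num) (by norm_num)
  have c5 : cstep 115 5 = 175 := cstep_eq _ _ 1 _ (by norm_num) (by norm_num)
  have c7 : cstep 115 7 = 11 := cstep_eq _ _ 5 _ (by norm_num) (by norm_num)
  rw [driftIneq, c1, c3, c5, c7]
  have hu11 : Real.sqrt 11 ≤ (331663/100000) := sqrtUB _ _ (by norm_num) (by norm_num)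
  have hu87 : Real.sqrt 87 ≤ (466369/50000) := sqrtUB _ _ (by norm_num) (by norm_num)
  have hu173 : Real.sqrt 173 ≤ (263059/20000) := sqrtUB _ _ (by norm_num) (by norm_num)
  have hu175 : Real.sqrt 175 ≤ (330719/25000) := sqrtUB _ _ (by norm_num) (by norm_num)
  have hl115 : ((53619/5000):ℝ) ≤ Real.sqrt 115 := sqrtLB _ _ (by norm_num) (by norm_num)
  simp only [VR, eeR, eeQ]
  norm_num
  linarith

lemma case_117 : driftIneq 117 := by
  have c1 : cstep 117 1 = 11 := cstep_eq _ _ 5 _ (by norm_num) (by norm_num)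
  have c3 : cstep 117 3 = 177 := cstep_eq _ _ 1 _ (by norm_num) (by norm_num)
  have c5 : cstep 117 5 = 89 := cstep_eq _ _ 2 _ (by norm_num) (by norm_num)
  have c7 : cstep 117 7 = 179 := cstep_eq _ _ 1 _ (by norm_num) (by norm_num)
  rw [driftIneq, c1, c3, c5, c7]
  have hu11 : Real.sqrt 11 ≤ (331663/100000) := sqrtUB _ _ (by norm_num) (by norm_num)
  have hu89 : Real.sqrt 89 ≤ (943399/100000) := sqrtUB _ _ (by norm_num) (by norm_num)
  have hu177 : Real.sqrt 177 ≤ (665207/50000) := sqrtUB _ _ (by norm_num) (by norm_num)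
  have hu179 : Real.sqrt 179 ≤ (1337909/100000) := sqrtUB _ _ (by norm_num) (by norm_num)
  have hl117 : ((216333/20000):ℝ) ≤ Real.sqrt 117 := sqrtLB _ _ (by norm_num) (by norm_num)
  simp only [VR, eeR, eeQ]
  norm_num
  linarith

lemma case_119 : driftIneq 119 := by
  have c1 : cstep 119 1 = 179 := cstep_eq _ _ 1 _ (by norm_num) (by norm_num)
  have c3 : cstep 119 3 = 45 := cstep_eq _ _ 3 _ (by norm_num) (by norm_num)
  have c5 : cstep 119 5 = 181 := cstep_eq _ _ 1 _ (by norm_num) (by norm_num)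
  have c7 : cstep 119 7 = 91 := cstep_eq _ _ 2 _ (by norm_num) (by norm_num)
  rw [driftIneq, c1, c3, c5, c7]
  have hu45 : Real.sqrt 45 ≤ (670821/100000) := sqrtUB _ _ (by norm_num) (by norm_num)
  have hu91 : Real.sqrt 91 ≤ (47697/5000) := sqrtUB _ _ (by norm_num) (by norm_num)
  have hu179 : Real.sqrt 179 ≤ (1337909/100000) := sqrtUB _ _ (by norm_num) (by norm_num)
  have hu181 : Real.sqrt 181 ≤ (1345363/100000) := sqrtUB _ _ (by norm_num) (by norm_num)
  have hl119 : ((1090871/100000):ℝ) ≤ Real.sqrt 119 := sqrtLB _ _ (by norm_num) (by norm_num)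
  simp only [VR, eeR, eeQ]
  norm_num
  linarith

lemma case_121 : driftIneq 121 := by
  have c1 : cstep 121 1 = 91 := cstep_eq _ _ 2 _ (by norm_num) (by norm_num)
  have c3 : cstep 121 3 = 183 := cstep_eq _ _ 1 _ (by norm_num) (by norm_num)
  have c5 : cstep 121 5 = 23 := cstep_eq _ _ 4 _ (by norm_num) (by norm_num)
  have c7 : cstep 121 7 = 185 := cstep_eq _ _ 1 _ (by norm_num) (by norm_num)
  rw [driftIneq, c1, c3, c5, c7]
  have hu23 : Real.sqrt 23 ≤ (14987/3125) := sqrtUB _ _ (by norm_num) (by norm_num)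
  have hu91 : Real.sqrt 91 ≤ (47697/5000) := sqrtUB _ _ (by norm_num) (by norm_num)
  have hu183 : Real.sqrt 183 ≤ (54111/4000) := sqrtUB _ _ (by norm_num) (by norm_num)
  have hu185 : Real.sqrt 185 ≤ (340037/25000) := sqrtUB _ _ (by norm_num) (by norm_num)
  have hl121 : (11:ℝ) ≤ Real.sqrt 121 := sqrtLB _ _ (by norm_num) (by norm_num)
  simp only [VR, eeR, eeQ]
  norm_num
  linarith

lemma case_123 : driftIneq 123 := by
  have c1 : cstep 123 1 = 185 := cstep_eq _ _ 1 _ (by norm_num) (by norm_num)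
  have c3 : cstep 123 3 = 93 := cstep_eq _ _ 2 _ (by norm_num) (by norm_num)
  have c5 : cstep 123 5 = 187 := cstep_eq _ _ 1 _ (by norm_num) (by norm_num)
  have c7 : cstep 123 7 = 47 := cstep_eq _ _ 3 _ (by norm_num) (by norm_num)
  rw [driftIneq, c1, c3, c5, c7]
  have hu47 : Real.sqrt 47 ≤ (342783/50000) := sqrtUB _ _ (by norm_num) (by norm_num)
  have hu93 : Real.sqrt 93 ≤ (482183/50000) := sqrtUB _ _ (by norm_num) (by norm_num)
  have hu185 : Real.sqrt 185 ≤ (340037/25000) := sqrtUB _ _ (by norm_num) (by norm_num)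
  have hu187 : Real.sqrt 187 ≤ (34187/2500) := sqrtUB _ _ (by norm_num) (by norm_num)
  have hl123 : ((1109053/100000):ℝ) ≤ Real.sqrt 123 := sqrtLB _ _ (by norm_num) (by norm_num)
  simp only [VR, eeR, eeQ]
  norm_num
  linarith

lemma case_125 : driftIneq 125 := by
  have c1 : cstep 125 1 = 47 := cstep_eq _ _ 3 _ (by norm_num) (by norm_num)
  have c3 : cstep 125 3 = 189 := cstep_eq _ _ 1 _ (by norm_num) (by norm_num)
  have c5 : cstep 125 5 = 95 := cstep_eq _ _ 2 _ (by norm_num) (by norm_num)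
  have c7 : cstep 125 7 = 191 := cstep_eq _ _ 1 _ (by norm_num) (by norm_num)
  rw [driftIneq, c1, c3, c5, c7]
  have hu47 : Real.sqrt 47 ≤ (342783/50000) := sqrtUB _ _ (by norm_num) (by norm_num)
  have hu95 : Real.sqrt 95 ≤ (24367/2500) := sqrtUB _ _ (by norm_num) (by norm_num)
  have hu189 : Real.sqrt 189 ≤ (1374773/100000) := sqrtUB _ _ (by norm_num) (by norm_num)
  have hu191 : Real.sqrt 191 ≤ (345507/25000) := sqrtUB _ _ (by norm_num) (by norm_num)
  have hl125 : ((1118033/100000):ℝ) ≤ Real.sqrt 125 := sqrtLB _ _ (by norm_num) (by norm_num)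
  simp only [VR, eeR, eeQ]
  norm_num
  linarith

lemma case_127 : driftIneq 127 := by
  have c1 : cstep 127 1 = 191 := cstep_eq _ _ 1 _ (by norm_num) (by norm_num)
  have c3 : cstep 127 3 = 3 := cstep_eq _ _ 7 _ (by norm_num) (by norm_num)
  have c5 : cstep 127 5 = 193 := cstep_eq _ _ 1 _ (by norm_num) (by norm_num)
  have c7 : cstep 127 7 = 97 := cstep_eq _ _ 2 _ (by norm_num) (by norm_num)
  rw [driftIneq, c1, c3, c5, c7]
  have hu3 : Real.sqrt 3 ≤ (86603/50000) := sqrtUB _ _ (by norm_num) (by norm_num)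
  have hu97 : Real.sqrt 97 ≤ (492443/50000) := sqrtUB _ _ (by norm_num) (by norm_num)
  have hu191 : Real.sqrt 191 ≤ (345507/25000) := sqrtUB _ _ (by norm_num) (by norm_num)
  have hu193 : Real.sqrt 193 ≤ (277849/20000) := sqrtUB _ _ (by norm_num) (by norm_num)
  have hl127 : ((563471/50000):ℝ) ≤ Real.sqrt 127 := sqrtLB _ _ (by norm_num) (by norm_num)
  simp only [VR, eeR, eeQ]
  norm_num
  linarith

lemma case_129 : driftIneq 129 := by
  have c1 : cstep 129 1 = 97 := cstep_eq _ _ 2 _ (by norm_num) (by norm_num)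
  have c3 : cstep 129 3 = 195 := cstep_eq _ _ 1 _ (by norm_num) (by norm_num)
  have c5 : cstep 129 5 = 49 := cstep_eq _ _ 3 _ (by norm_num) (by norm_num)
  have c7 : cstep 129 7 = 197 := cstep_eq _ _ 1 _ (by norm_num) (by norm_num)
  rw [driftIneq, c1, c3, c5, c7]
  have hu49 : Real.sqrt 49 ≤ 7 := sqrtUB _ _ (by norm_num) (by norm_num)
  have hu97 : Real.sqrt 97 ≤ (492443/50000) := sqrtUB _ _ (by norm_num) (by norm_num)
  have hu195 : Real.sqrt 195 ≤ (55857/4000) := sqrtUB _ _ (by norm_num) (by norm_num)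
  have hu197 : Real.sqrt 197 ≤ (1403567/100000) := sqrtUB _ _ (by norm_num) (by norm_num)
  have hl129 : ((1135781/100000):ℝ) ≤ Real.sqrt 129 := sqrtLB _ _ (by norm_num) (by norm_num)
  simp only [VR, eeR, eeQ]
  norm_num
  linarith

lemma case_131 : driftIneq 131 := by
  have c1 : cstep 131 1 = 197 := cstep_eq _ _ 1 _ (by norm_num) (by norm_num)
  have c3 : cstep 131 3 = 99 := cstep_eq _ _ 2 _ (by norm_num) (by norm_num)
  have c5 : cstep 131 5 = 199 := cstep_eq _ _ 1 _ (by norm_num) (by norm_num)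
  have c7 : cstep 131 7 = 25 := cstep_eq _ _ 4 _ (by norm_num) (by norm_num)
  rw [driftIneq, c1, c3, c5, c7]
  have hu25 : Real.sqrt 25 ≤ 5 := sqrtUB _ _ (by norm_num) (by norm_num)
  have hu99 : Real.sqrt 99 ≤ (248747/25000) := sqrtUB _ _ (by norm_num) (by norm_num)
  have hu197 : Real.sqrt 197 ≤ (1403567/100000) := sqrtUB _ _ (by norm_num) (by norm_num)
  have hu199 : Real.sqrt 199 ≤ (705337/50000) := sqrtUB _ _ (by norm_num) (by norm_num)
  have hl131 : ((143069/12500):ℝ) ≤ Real.sqrt 131 := sqrtLB _ _ (by norm_num) (by norm_num)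
  simp only [VR, eeR, eeQ]
  norm_num
  linarith

lemma case_133 : driftIneq 133 := by
  have c1 : cstep 133 1 = 25 := cstep_eq _ _ 4 _ (by norm_num) (by norm_num)
  have c3 : cstep 133 3 = 201 := cstep_eq _ _ 1 _ (by norm_num) (by norm_num)
  have c5 : cstep 133 5 = 101 := cstep_eq _ _ 2 _ (by norm_num) (by norm_num)
  have c7 : cstep 133 7 = 203 := cstep_eq _ _ 1 _ (by norm_num) (by norm_num)
  rw [driftIneq, c1, c3, c5, c7]
  have hu25 : Real.sqrt 25 ≤ 5 := sqrtUB _ _ (by norm_num) (by norm_num)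
  have hu101 : Real.sqrt 101 ≤ (251247/25000) := sqrtUB _ _ (by norm_num) (by norm_num)
  have hu201 : Real.sqrt 201 ≤ (283549/20000) := sqrtUB _ _ (by norm_num) (by norm_num)
  have hu203 : Real.sqrt 203 ≤ (1424781/100000) := sqrtUB _ _ (by norm_num) (by norm_num)
  have hl133 : ((144157/12500):ℝ) ≤ Real.sqrt 133 := sqrtLB _ _ (by norm_num) (by norm_num)
  simp only [VR, eeR, eeQ]
  norm_num
  linarith

lemma case_135 : driftIneq 135 := by
  have c1 : cstep 135 1 = 203 := cstep_eq _ _ 1 _ (by norm_num) (by norm_num)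
  have c3 : cstep 135 3 = 51 := cstep_eq _ _ 3 _ (by norm_num) (by norm_num)
  have c5 : cstep 135 5 = 205 := cstep_eq _ _ 1 _ (by norm_num) (by norm_num)
  have c7 : cstep 135 7 = 103 := cstep_eq _ _ 2 _ (by norm_num) (by norm_num)
  rw [driftIneq, c1, c3, c5, c7]
  have hu51 : Real.sqrt 51 ≤ (714143/100000) := sqrtUB _ _ (by norm_num) (by norm_num)
  have hu103 : Real.sqrt 103 ≤ (101489/10000) := sqrtUB _ _ (by norm_num) (by norm_num)
  have hu203 : Real.sqrt 203 ≤ (1424781/100000) := sqrtUB _ _ (by norm_num) (by norm_num)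
  have hu205 : Real.sqrt 205 ≤ (1431783/100000) := sqrtUB _ _ (by norm_num) (by norm_num)
  have hl135 : ((232379/20000):ℝ) ≤ Real.sqrt 135 := sqrtLB _ _ (by norm_num) (by norm_num)
  simp only [VR, eeR, eeQ]
  norm_num
  linarith

lemma case_137 : driftIneq 137 := by
  have c1 : cstep 137 1 = 103 := cstep_eq _ _ 2 _ (by norm_num) (by norm_num)
  have c3 : cstep 137 3 = 207 := cstep_eq _ _ 1 _ (by norm_num) (by norm_num)
  have c5 : cstep 137 5 = 13 := cstep_eq _ _ 5 _ (by norm_num) (by norm_num)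
  have c7 : cstep 137 7 = 209 := cstep_eq _ _ 1 _ (by norm_num) (by norm_num)
  rw [driftIneq, c1, c3, c5, c7]
  have hu13 : Real.sqrt 13 ≤ (90139/25000) := sqrtUB _ _ (by norm_num) (by norm_num)
  have hu103 : Real.sqrt 103 ≤ (101489/10000) := sqrtUB _ _ (by norm_num) (by norm_num)
  have hu207 : Real.sqrt 207 ≤ (1151/80) := sqrtUB _ _ (by norm_num) (by norm_num)
  have hu209 : Real.sqrt 209 ≤ (361421/25000) := sqrtUB _ _ (by norm_num) (by norm_num)
  have hl137 : ((1170469/100000):ℝ) ≤ Real.sqrt 137 := sqrtLB _ _ (by norm_num) (by norm_num)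
  simp only [VR, eeR, eeQ]
  norm_num
  linarith

lemma case_139 : driftIneq 139 := by
  have c1 : cstep 139 1 = 209 := cstep_eq _ _ 1 _ (by norm_num) (by norm_num)
  have c3 : cstep 139 3 = 105 := cstep_eq _ _ 2 _ (by norm_num) (by norm_num)
  have c5 : cstep 139 5 = 211 := cstep_eq _ _ 1 _ (by norm_num) (by norm_num)
  have c7 : cstep 139 7 = 53 := cstep_eq _ _ 3 _ (by norm_num) (by norm_num)
  rw [driftIneq, c1, c3, c5, c7]
  have hu53 : Real.sqrt 53 ≤ (728011/100000) := sqrtUB _ _ (by norm_num) (by norm_num)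
  have hu105 : Real.sqrt 105 ≤ (128087/12500) := sqrtUB _ _ (by norm_num) (by norm_num)
  have hu209 : Real.sqrt 209 ≤ (361421/25000) := sqrtUB _ _ (by norm_num) (by norm_num)
  have hu211 : Real.sqrt 211 ≤ (181573/12500) := sqrtUB _ _ (by norm_num) (by norm_num)
  have hl139 : ((589491/50000):ℝ) ≤ Real.sqrt 139 := sqrtLB _ _ (by norm_num) (by norm_num)
  simp only [VR, eeR, eeQ]
  norm_num
  linarith

lemma case_141 : driftIneq 141 := by
  have c1 : cstep 141 1 = 53 := cstep_eq _ _ 3 _ (by norm_num) (by norm_num)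
  have c3 : cstep 141 3 = 213 := cstep_eq _ _ 1 _ (by norm_num) (by norm_num)
  have c5 : cstep 141 5 = 107 := cstep_eq _ _ 2 _ (by norm_num) (by norm_num)
  have c7 : cstep 141 7 = 215 := cstep_eq _ _ 1 _ (by norm_num) (by norm_num)
  rw [driftIneq, c1, c3, c5, c7]
  have hu53 : Real.sqrt 53 ≤ (728011/100000) := sqrtUB _ _ (by norm_num) (by norm_num)
  have hu107 : Real.sqrt 107 ≤ (1034409/100000) := sqrtUB _ _ (by norm_num) (by norm_num)
  have hu213 : Real.sqrt 213 ≤ (364863/25000) := sqrtUB _ _ (by norm_num) (by norm_num)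
  have hu215 : Real.sqrt 215 ≤ (91643/6250) := sqrtUB _ _ (by norm_num) (by norm_num)
  have hl141 : ((593717/50000):ℝ) ≤ Real.sqrt 141 := sqrtLB _ _ (by norm_num) (by norm_num)
  simp only [VR, eeR, eeQ]
  norm_num
  linarith

lemma case_143 : driftIneq 143 := by
  have c1 : cstep 143 1 = 215 := cstep_eq _ _ 1 _ (by norm_num) (by norm_num)
  have c3 : cstep 143 3 = 27 := cstep_eq _ _ 4 _ (by norm_num) (by norm_num)
  have c5 : cstep 143 5 = 217 := cstep_eq _ _ 1 _ (by norm_num) (by norm_num)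
  have c7 : cstep 143 7 = 109 := cstep_eq _ _ 2 _ (by norm_num) (by norm_num)
  rw [driftIneq, c1, c3, c5, c7]
  have hu27 : Real.sqrt 27 ≤ (16238/3125) := sqrtUB _ _ (by norm_num) (by norm_num)
  have hu109 : Real.sqrt 109 ≤ (1044031/100000) := sqrtUB _ _ (by norm_num) (by norm_num)
  have hu215 : Real.sqrt 215 ≤ (91643/6250) := sqrtUB _ _ (by norm_num) (by norm_num)
  have hu217 : Real.sqrt 217 ≤ (368273/25000) := sqrtUB _ _ (by norm_num) (by norm_num)
  have hl143 : ((597913/50000):ℝ) ≤ Real.sqrt 143 := sqrtLB _ _ (by norm_num) (by norm_num)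
  simp only [VR, eeR, eeQ]
  norm_num
  linarith

lemma case_145 : driftIneq 145 := by
  have c1 : cstep 145 1 = 109 := cstep_eq _ _ 2 _ (by norm_num) (by norm_num)
  have c3 : cstep 145 3 = 219 := cstep_eq _ _ 1 _ (by norm_num) (by norm_num)
  have c5 : cstep 145 5 = 55 := cstep_eq _ _ 3 _ (by norm_num) (by norm_num)
  have c7 : cstep 145 7 = 221 := cstep_eq _ _ 1 _ (by norm_num) (by norm_num)
  rw [driftIneq, c1, c3, c5, c7]
  have hu55 : Real.sqrt 55 ≤ (37081/5000) := sqrtUB _ _ (by norm_num) (by norm_num)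
  have hu109 : Real.sqrt 109 ≤ (1044031/100000) := sqrtUB _ _ (by norm_num) (by norm_num)
  have hu219 : Real.sqrt 219 ≤ (295973/20000) := sqrtUB _ _ (by norm_num) (by norm_num)
  have hu221 : Real.sqrt 221 ≤ (1486607/100000) := sqrtUB _ _ (by norm_num) (by norm_num)
  have hl145 : ((1204159/100000):ℝ) ≤ Real.sqrt 145 := sqrtLB _ _ (by norm_num) (by norm_num)
  simp only [VR, eeR, eeQ]
  norm_num
  linarith

lemma case_147 : driftIneq 147 := by
  have c1 : cstep 147 1 = 221 := cstep_eq _ _ 1 _ (by norm_num) (by norm_num)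
  have c3 : cstep 147 3 = 111 := cstep_eq _ _ 2 _ (by norm_num) (by norm_num)
  have c5 : cstep 147 5 = 223 := cstep_eq _ _ 1 _ (by norm_num) (by norm_num)
  have c7 : cstep 147 7 = 7 := cstep_eq _ _ 6 _ (by norm_num) (by norm_num)
  rw [driftIneq, c1, c3, c5, c7]
  have hu7 : Real.sqrt 7 ≤ (8268/3125) := sqrtUB _ _ (by norm_num) (by norm_num)
  have hu111 : Real.sqrt 111 ≤ (526783/50000) := sqrtUB _ _ (by norm_num) (by norm_num)
  have hu221 : Real.sqrt 221 ≤ (1486607/100000) := sqrtUB _ _ (by norm_num) (by norm_num)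
  have hu223 : Real.sqrt 223 ≤ (1493319/100000) := sqrtUB _ _ (by norm_num) (by norm_num)
  have hl147 : ((242487/20000):ℝ) ≤ Real.sqrt 147 := sqrtLB _ _ (by norm_num) (by norm_num)
  simp only [VR, eeR, eeQ]
  norm_num
  linarith

lemma case_149 : driftIneq 149 := by
  have c1 : cstep 149 1 = 7 := cstep_eq _ _ 6 _ (by norm_num) (by norm_num)
  have c3 : cstep 149 3 = 225 := cstep_eq _ _ 1 _ (by norm_num) (by norm_num)
  have c5 : cstep 149 5 = 113 := cstep_eq _ _ 2 _ (by norm_num) (by norm_num)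
  have c7 : cstep 149 7 = 227 := cstep_eq _ _ 1 _ (by norm_num) (by norm_num)
  rw [driftIneq, c1, c3, c5, c7]
  have hu7 : Real.sqrt 7 ≤ (8268/3125) := sqrtUB _ _ (by norm_num) (by norm_num)
  have hu113 : Real.sqrt 113 ≤ (212603/20000) := sqrtUB _ _ (by norm_num) (by norm_num)
  have hu225 : Real.sqrt 225 ≤ 15 := sqrtUB _ _ (by norm_num) (by norm_num)
  have hu227 : Real.sqrt 227 ≤ (376663/25000) := sqrtUB _ _ (by norm_num) (by norm_num)
  have hl149 : ((244131/20000):ℝ) ≤ Real.sqrt 149 := sqrtLB _ _ (by norm_num) (by norm_num)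
  simp only [VR, eeR, eeQ]
  norm_num
  linarith

lemma drift_small (x : ℕ) (h2 : x % 2 = 1) (h1 : x ≠ 1) (hlt : x < 151) :
    driftIneq x := by
  have hx : x = 3 ∨ x = 5 ∨ x = 7 ∨ x = 9 ∨ x = 11 ∨ x = 13 ∨ x = 15 ∨ x = 17 ∨ x = 19 ∨ x = 21 ∨ x = 23 ∨ x = 25 ∨ x = 27 ∨ x = 29 ∨ x = 31 ∨ x = 33 ∨ x = 35 ∨ x = 37 ∨ x = 39 ∨ x = 41 ∨ x = 43 ∨ x = 45 ∨ x = 47 ∨ x = 49 ∨ x = 51 ∨ x = 53 ∨ x = 55 ∨ x = 57 ∨ x = 59 ∨ x = 61 ∨ x = 63 ∨ x = 65 ∨ x = 67 ∨ x = 69 ∨ x = 71 ∨ x = 73 ∨ x = 75 ∨ x = 77 ∨ x = 79 ∨ x = 81 ∨ x = 83 ∨ x = 85 ∨ x = 87 ∨ x = 89 ∨ x = 91 ∨ x = 93 ∨ x = 95 ∨ x = 97 ∨ x = 99 ∨ x = 101 ∨ x = 103 ∨ x = 105 ∨ x = 107 ∨ x = 109 ∨ x = 111 ∨ x = 113 ∨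 x = 115 ∨ x = 117 ∨ x = 119 ∨ x = 121 ∨ x = 123 ∨ x = 125 ∨ x = 127 ∨ x = 129 ∨ x = 131 ∨ x = 133 ∨ x = 135 ∨ x = 137 ∨ x = 139 ∨ x = 141 ∨ x = 143 ∨ x = 145 ∨ x = 147 ∨ x = 149 := by omega
  rcases hx with rfl|rfl|rfl|rfl|rfl|rfl|rfl|rfl|rfl|rfl|rfl|rfl|rfl|rfl|rfl|rfl|rfl|rfl|rfl|rfl|rfl|rfl|rfl|rfl|rfl|rfl|rfl|rfl|rfl|rfl|rfl|rfl|rfl|rfl|rfl|rfl|rfl|rfl|rfl|rfl|rfl|rfl|rfl|rfl|rfl|rfl|rfl|rfl|rfl|rfl|rfl|rfl|rfl|rfl|rfl|rfl|rfl|rfl|rfl|rfl|rfl|rfl|rfl|rfl|rfl|rfl|rfl|rfl|rfl|rfl|rfl|rfl|rfl|rfl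
  · exact case_3
  · exact case_5
  · exact case_7
  · exact case_9
  · exact case_11
  · exact case_13
  · exact case_15
  · exact case_17
  · exact case_19
  · exact case_21
  · exact case_23
  · exact case_25
  · exact case_27
  · exact case_29
  · exact case_31
  · exact case_33
  · exact case_35
  · exact case_37
  · exact case_39
  · exact case_41
  · exact case_43
  · exact case_45
  · exact case_47
  · exact case_49
  · exact case_51
  · exact case_53
  · exact case_55
  · exact case_57
  · exact case_59
  · exact case_61
  · exact case_63
  · exact case_65
  · exact case_67
  · exact case_69
  · exact case_71
  · exact case_73
  · exact case_75
  · exact case_77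
  · exact case_79
  · exact case_81
  · exact case_83
  · exact case_85
  · exact case_87
  · exact case_89
  · exact case_91
  · exact case_93
  · exact case_95
  · exact case_97
  · exact case_99
  · exact case_101
  · exact case_103
  · exact case_105
  · exact case_107
  · exact case_109
  · exact case_111
  · exact case_113
  · exact case_115
  · exact case_117
  · exact case_119
  · exact case_121
  · exact case_123
  · exact case_125
  · exact case_127
  · exact case_129
  · exact case_131
  · exact case_133
  · exact case_135
  · exact case_137
  · exact case_139
  · exact case_141
  · exact case_143
  · exact case_145
  · exact case_147
  · exact case_149
lemma drift_real (x : ℕ) (h2 : x % 2 = 1) (h1 : x ≠ 1) : driftIneq x := by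
  by_cases h : x < 151
  · exact drift_small x h2 h1 h
  · exact drift_tail x h2 (by omega)




open ProbabilityTheory MeasureTheory

noncomputable def EV : ℕ → ENNReal := fun y => ENNReal.ofReal (VR y)

lemma EV_ne_top (y : ℕ) : EV y ≠ ⊤ := ENNReal.ofReal_ne_top

lemma drift_ennreal (x : ℕ) (h2 : x % 2 = 1) (h1 : x ≠ 1) :
    EV (cstep x 1) + EV (cstep x 3) + EV (cstep x 5) + EV (cstep x 7) + 4 ≤ 4 * EV x := by
  have h := drift_real x h2 h1
  rw [driftIneq] at h
  have n1 := VR_nonneg (cstep x 1)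
  have n3 := VR_nonneg (cstep x 3)
  have n5 := VR_nonneg (cstep x 5)
  have n7 := VR_nonneg (cstep x 7)
  have nx := VR_nonneg x
  calc EV (cstep x 1) + EV (cstep x 3) + EV (cstep x 5) + EV (cstep x 7) + 4
      = ENNReal.ofReal (VR (cstep x 1) + VR (cstep x 3) + VR (cstep x 5) + VR (cstep x 7) + 4) := by
        rw [ENNReal.ofReal_add (by linarith) (by norm_num),
          ENNReal.ofReal_add (by linarith) n7, ENNReal.ofReal_add (by linarith) n5,
          ENNReal.ofReal_add n1 n3]
        norm_num [EV]
  _ ≤ ENNReal.ofReal (4 * VR x) := ENNReal.ofReal_le_ofReal h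
  _ = 4 * EV x := by
        rw [ENNReal.ofReal_mul (by norm_num)]
        norm_num [EV]

lemma allMeasurable {γ : Type*} [MeasurableSpace γ] [Countable γ]
    (hsing : ∀ x : γ, MeasurableSet ({x} : Set γ)) (s : Set γ) : MeasurableSet s := by
  rw [← Set.biUnion_of_singleton s]
  exact MeasurableSet.biUnion (Set.to_countable s) (fun b _ => hsing b)

lemma pi_all_meas {F : Finset ℕ} (s : Set ((i : F) → ℕ)) : MeasurableSet s := by
  apply allMeasurable _ s
  intro v
  have hv : ({v} : Set ((i : F) → ℕ)) = ⋂ i, (fun u : (i : F) → ℕ => u i) ⁻¹' {v i} := by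
    ext u; simp [funext_iff]
  rw [hv]
  exact MeasurableSet.iInter (fun i => measurable_pi_apply i (measurableSet_singleton _))

section Prob

variable {Ω : Type*} [MeasurableSpace Ω] {μ : MeasureTheory.Measure Ω}
  [MeasureTheory.IsProbabilityMeasure μ] {ξ : ℕ → Ω → ℕ}

lemma indep_next (hξmeas : ∀ n, Measurable (ξ n))
    (hξindep : iIndepFun ξ μ)
    (n : ℕ) (j : ℕ) (B : Set Ω)
    (hdet : ∀ ω ω' : Ω, (∀ i, i ≤ n → ξ i ω = ξ i ω') → ω ∈ B → ω' ∈ B) :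
    μ (B ∩ {ω | ξ (n+1) ω = j}) = μ B * μ {ω | ξ (n+1) ω = j} := by
  classical
  have hST : Disjoint (Finset.range (n+1)) ({n+1} : Finset ℕ) := by
    simp [Finset.disjoint_left]
    omega
  have hIF := hξindep.indepFun_finset (Finset.range (n+1)) ({n+1} : Finset ℕ) hST hξmeas
  rw [indepFun_iff_measure_inter_preimage_eq_mul] at hIF
  set f : Ω → (i : Finset.range (n+1)) → ℕ := fun a i => ξ i a with hf
  set g : Ω → (i : ({n+1} : Finset ℕ)) → ℕ := fun a i => ξ i a with hg
  set s : Set ((i : Finset.range (n+1)) → ℕ) := f '' B with hs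
  set t : Set ((i : ({n+1} : Finset ℕ)) → ℕ) :=
    {u | u ⟨n+1, by simp⟩ = j} with ht
  have hBs : f ⁻¹' s = B := by
    ext ω'
    constructor
    · rintro ⟨ω, hω, hfe⟩
      refine hdet ω ω' ?_ hω
      intro i hi
      have := congrFun hfe (⟨i, by simp; omega⟩ : (Finset.range (n+1) : Finset ℕ))
      simpa [hf] using this
    · intro h
      exact ⟨ω', h, rfl⟩
  have hgt : g ⁻¹' t = {ω | ξ (n+1) ω = j} := by
    ext ω; simp [hg, ht]
  have := hIF s t (pi_all_meas s) (pi_all_meas t)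
  rw [hBs, hgt] at this
  exact this


def Aset (X : ℕ → Ω → ℕ) (n : ℕ) : Set Ω := {ω | ∀ k, 1 ≤ k → k ≤ n → X k ω ≠ 1}

lemma Aset_anti (X : ℕ → Ω → ℕ) (n : ℕ) : Aset X (n+1) ⊆ Aset X n :=
  fun _ h k h1 h2 => h k h1 (by omega)

lemma Aset_meas (X : ℕ → Ω → ℕ) (hXmeas : ∀ k, Measurable (X k)) (n : ℕ) :
    MeasurableSet (Aset X n) := by
  have h : Aset X n = ⋂ k : ℕ, {ω | 1 ≤ k → k ≤ n → X k ω ≠ 1} := by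
    ext ω; simp [Aset, Set.mem_iInter]
  rw [h]
  refine MeasurableSet.iInter (fun k => ?_)
  by_cases hk : 1 ≤ k ∧ k ≤ n
  · have : {ω | 1 ≤ k → k ≤ n → X k ω ≠ 1} = X k ⁻¹' ({1}ᶜ) := by
      ext ω; simp [hk.1, hk.2]
    rw [this]
    exact hXmeas k (measurableSet_singleton 1).compl
  · have : {ω | 1 ≤ k → k ≤ n → X k ω ≠ 1} = Set.univ := by
      ext ω; simp; intro h1 h2; exact absurd ⟨h1, h2⟩ hk
    rw [this]
    exact MeasurableSet.univ

variable {X : ℕ → Ω → ℕ}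

lemma X_meas (hξmeas : ∀ n, Measurable (ξ n)) (hX0 : ∀ ω, X 0 ω = 1)
    (hXrec : ∀ n ω, X (n + 1) ω =
      (3 * X n ω + ξ (n + 1) ω) / 2 ^ padicValNat 2 (3 * X n ω + ξ (n + 1) ω)) :
    ∀ k, Measurable (X k) := by
  intro k
  induction k with
  | zero =>
    have : X 0 = fun _ => 1 := funext hX0
    rw [this]; exact measurable_const
  | succ n ih =>
    have : X (n+1) = (fun p : ℕ × ℕ => (3*p.1+p.2) / 2 ^ padicValNat 2 (3*p.1+p.2)) ∘
        (fun ω => (X n ω, ξ (n+1) ω)) := funext fun ω => hXrec n ω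
    rw [this]
    exact (measurable_of_countable _).comp (ih.prodMk (hξmeas (n+1)))

lemma X_det (hX0 : ∀ ω, X 0 ω = 1)
    (hXrec : ∀ n ω, X (n + 1) ω =
      (3 * X n ω + ξ (n + 1) ω) / 2 ^ padicValNat 2 (3 * X n ω + ξ (n + 1) ω)) :
    ∀ m (ω ω' : Ω), (∀ i, i ≤ m → ξ i ω = ξ i ω') → X m ω = X m ω' := by
  intro m
  induction m with
  | zero => intro ω ω' _; rw [hX0, hX0]
  | succ n ih =>
    intro ω ω' he
    rw [hXrec, hXrec, ih ω ω' (fun i hi => he i (by omega)), he (n+1) le_rfl]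

lemma cstep_odd (m : ℕ) (hm : m ≠ 0) : (m / 2 ^ padicValNat 2 m) % 2 = 1 := by
  have h := Nat.not_dvd_ordCompl Nat.prime_two hm
  rw [Nat.factorization_def m Nat.prime_two] at h
  omega

lemma X_odd (hξval : ∀ n ω, ξ n ω = 1 ∨ ξ n ω = 3 ∨ ξ n ω = 5 ∨ ξ n ω = 7)
    (hX0 : ∀ ω, X 0 ω = 1)
    (hXrec : ∀ n ω, X (n + 1) ω =
      (3 * X n ω + ξ (n + 1) ω) / 2 ^ padicValNat 2 (3 * X n ω + ξ (n + 1) ω)) :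
    ∀ n ω, X n ω % 2 = 1 := by
  intro n
  induction n with
  | zero => intro ω; rw [hX0]
  | succ n ih =>
    intro ω
    rw [hXrec]
    apply cstep_odd
    rcases hξval (n+1) ω with h|h|h|h <;> omega

lemma foster_step
    (hξval : ∀ n ω, ξ n ω = 1 ∨ ξ n ω = 3 ∨ ξ n ω = 5 ∨ ξ n ω = 7)
    (hξmeas : ∀ n, Measurable (ξ n))
    (hξindep : ProbabilityTheory.iIndepFun ξ μ)
    (hξdist : ∀ n, μ {ω | ξ n ω = 1} = 1/4 ∧ μ {ω | ξ n ω = 3} = 1/4 ∧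
      μ {ω | ξ n ω = 5} = 1/4 ∧ μ {ω | ξ n ω = 7} = 1/4)
    (hX0 : ∀ ω, X 0 ω = 1)
    (hXrec : ∀ n ω, X (n + 1) ω =
      (3 * X n ω + ξ (n + 1) ω) / 2 ^ padicValNat 2 (3 * X n ω + ξ (n + 1) ω))
    (n : ℕ) (hn : 1 ≤ n) :
    (∫⁻ ω, (Aset X (n+1)).indicator (fun ω => EV (X (n+1) ω)) ω ∂μ) + μ (Aset X (n+1))
      ≤ ∫⁻ ω, (Aset X n).indicator (fun ω => EV (X n ω)) ω ∂μ := by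
  classical
  have hXmeas := X_meas hξmeas hX0 hXrec
  have hXdet := X_det hX0 hXrec
  have hXodd := X_odd hξval hX0 hXrec
  set B : ℕ → Set Ω := fun x => Aset X n ∩ X n ⁻¹' {x} with hB
  have hBmeas : ∀ x, MeasurableSet (B x) := fun x =>
    (Aset_meas X hXmeas n).inter (hXmeas n (measurableSet_singleton x))
  set F1 : Ω → ENNReal := fun ω => EV (X (n+1) ω) + 1 with hF1
  have hF1meas : Measurable F1 :=
    ((measurable_of_countable EV).comp (hXmeas (n+1))).add measurable_const
  set F2 : Ω → ENNReal := fun ω => EV (X n ω) with hF2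
  have hF2meas : Measurable F2 := (measurable_of_countable EV).comp (hXmeas n)
  -- splitting lemma
  have hsplit : ∀ F : Ω → ENNReal, Measurable F →
      ∫⁻ ω, (Aset X n).indicator F ω ∂μ = ∑' x : ℕ, ∫⁻ ω, (B x).indicator F ω ∂μ := by
    intro F hF
    rw [← lintegral_tsum (fun x => (hF.indicator (hBmeas x)).aemeasurable)]
    apply lintegral_congr
    intro ω
    by_cases hω : ω ∈ Aset X n
    · rw [Set.indicator_of_mem hω]
      rw [tsum_eq_single (X n ω) ?_]
      · rw [Set.indicator_of_mem (show ω ∈ B (X n ω) from ⟨hω, rfl⟩)]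
      · intro b hb
        exact Set.indicator_of_notMem (fun hmem => hb (Set.mem_singleton_iff.1 hmem.2).symm) F
    · rw [Set.indicator_of_notMem hω]
      rw [tsum_congr (fun x => Set.indicator_of_notMem (fun hmem => hω hmem.1) F)]
      exact tsum_zero.symm
  -- step 1 : LHS ≤ ∫ indicator (A n) F1
  have step1 : (∫⁻ ω, (Aset X (n+1)).indicator (fun ω => EV (X (n+1) ω)) ω ∂μ)
      + μ (Aset X (n+1)) ≤ ∫⁻ ω, (Aset X n).indicator F1 ω ∂μ := by
    have hconst : μ (Aset X (n+1)) =
        ∫⁻ ω, (Aset X (n+1)).indicator (fun _ => (1:ENNReal)) ω ∂μ := by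
      rw [lintegral_indicator_const (Aset_meas X hXmeas (n+1)), one_mul]
    have hmeas1 : Measurable (fun ω => EV (X (n+1) ω)) :=
      (measurable_of_countable EV).comp (hXmeas (n+1))
    rw [hconst, ← lintegral_add_left (hmeas1.indicator (Aset_meas X hXmeas (n+1)))]
    apply lintegral_mono
    intro ω
    have : (Aset X (n+1)).indicator (fun ω => EV (X (n+1) ω)) ω
        + (Aset X (n+1)).indicator (fun _ => (1:ENNReal)) ω
        = (Aset X (n+1)).indicator F1 ω := by
      by_cases hω : ω ∈ Aset X (n+1) <;>
        simp [Set.indicator_apply, hω, hF1]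
    exact le_trans (le_of_eq this)
      (Set.indicator_le_indicator_of_subset (Aset_anti X n) (fun _ => zero_le) ω)
  -- per-x estimate
  have key : ∀ x : ℕ, ∫⁻ ω, (B x).indicator F1 ω ∂μ ≤ EV x * μ (B x) := by
    intro x
    by_cases hx : x % 2 = 1 ∧ x ≠ 1
    · -- decompose over the four values of ξ (n+1)
      set C : ℕ → Set Ω := fun j => B x ∩ {ω | ξ (n+1) ω = j} with hC
      have hCmeas : ∀ j, MeasurableSet (C j) := fun j =>
        (hBmeas x).inter (hξmeas (n+1) (measurableSet_singleton j))
      have hpt : ∀ ω, (B x).indicator F1 ω =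
          (C 1).indicator F1 ω + (C 3).indicator F1 ω
          + (C 5).indicator F1 ω + (C 7).indicator F1 ω := by
        intro ω
        by_cases hω : ω ∈ B x
        · rcases hξval (n+1) ω with h|h|h|h <;>
            simp [Set.indicator_apply, hC, hω, h]
        · simp [Set.indicator_apply, hC, hω]
      -- each piece
      have hterm : ∀ j, μ {ω | ξ (n+1) ω = j} = 1/4 →
          ∫⁻ ω, (C j).indicator F1 ω ∂μ = (EV (cstep x j) + 1) * (μ (B x) * (1/4)) := by
        intro j hj4
        have hcongr : Set.EqOn F1 (fun _ => EV (cstep x j) + 1) (C j) := by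
          intro ω hω
          have hXx : X n ω = x := Set.mem_singleton_iff.1 hω.1.2
          have hXj : ξ (n+1) ω = j := hω.2
          have h1 : X (n+1) ω = cstep x j := by
            rw [hXrec, hXx, hXj]; rfl
          simp [hF1, h1]
        rw [Set.indicator_congr hcongr, lintegral_indicator_const (hCmeas j)]
        congr 1
        rw [hC]
        have hdetB : ∀ ω ω' : Ω, (∀ i, i ≤ n → ξ i ω = ξ i ω') → ω ∈ B x → ω' ∈ B x := by
          intro ω ω' he hω
          refine ⟨?_, ?_⟩
          · intro k h1 h2
            rw [← hXdet k ω ω' (fun i hi => he i (by omega))]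
            exact hω.1 k h1 h2
          · rw [Set.mem_preimage, ← hXdet n ω ω' he]
            exact hω.2
        rw [indep_next hξmeas hξindep n j (B x) hdetB, hj4]
      have h1 := hterm 1 (hξdist (n+1)).1
      have h3 := hterm 3 (hξdist (n+1)).2.1
      have h5 := hterm 5 (hξdist (n+1)).2.2.1
      have h7 := hterm 7 (hξdist (n+1)).2.2.2
      rw [lintegral_congr hpt]
      rw [lintegral_add_left (f := fun a => (C 1).indicator F1 a + (C 3).indicator F1 a + (C 5).indicator F1 a) (((hF1meas.indicator (hCmeas 1)).add
            (hF1meas.indicator (hCmeas 3))).add (hF1meas.indicator (hCmeas 5))),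
        lintegral_add_left (f := fun a => (C 1).indicator F1 a + (C 3).indicator F1 a) ((hF1meas.indicator (hCmeas 1)).add (hF1meas.indicator (hCmeas 3))),
        lintegral_add_left (hF1meas.indicator (hCmeas 1)), h1, h3, h5, h7]
      have hdrift := drift_ennreal x hx.1 hx.2
      have hc : (4:ENNReal) * (1/4) = 1 := by
        rw [one_div, ENNReal.mul_inv_cancel] <;> norm_num
      calc (EV (cstep x 1) + 1) * (μ (B x) * (1/4)) + (EV (cstep x 3) + 1) * (μ (B x) * (1/4))
            + (EV (cstep x 5) + 1) * (μ (B x) * (1/4)) + (EV (cstep x 7) + 1) * (μ (B x) * (1/4))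
          = (EV (cstep x 1) + EV (cstep x 3) + EV (cstep x 5) + EV (cstep x 7) + 4)
              * (μ (B x) * (1/4)) := by ring
      _ ≤ (4 * EV x) * (μ (B x) * (1/4)) := mul_le_mul_left hdrift _
      _ = EV x * ((4 * (1/4)) * μ (B x)) := by ring
      _ = EV x * μ (B x) := by rw [hc, one_mul]
    · -- B x is empty
      have hempty : B x = ∅ := by
        ext ω
        simp only [hB, Set.mem_inter_iff, Set.mem_preimage, Set.mem_singleton_iff,
          Set.mem_empty_iff_false, iff_false, not_and]
        intro hA hXx
        have ho := hXodd n ω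
        have hne := hA n hn le_rfl
        rw [hXx] at ho hne
        exact hx ⟨ho, hne⟩
      rw [hempty]
      simp
  -- assemble
  calc (∫⁻ ω, (Aset X (n+1)).indicator (fun ω => EV (X (n+1) ω)) ω ∂μ) + μ (Aset X (n+1))
      ≤ ∫⁻ ω, (Aset X n).indicator F1 ω ∂μ := step1
  _ = ∑' x : ℕ, ∫⁻ ω, (B x).indicator F1 ω ∂μ := hsplit F1 hF1meas
  _ ≤ ∑' x : ℕ, EV x * μ (B x) := ENNReal.tsum_le_tsum key
  _ = ∑' x : ℕ, ∫⁻ ω, (B x).indicator F2 ω ∂μ := by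
      refine tsum_congr (fun x => ?_)
      have hcg : Set.EqOn F2 (fun _ => EV x) (B x) := fun ω hω => by
        simp [hF2, Set.mem_singleton_iff.1 hω.2]
      rw [Set.indicator_congr hcg, lintegral_indicator_const (hBmeas x)]
  _ = ∫⁻ ω, (Aset X n).indicator F2 ω ∂μ := (hsplit F2 hF2meas).symm

end Prob


lemma EV_one : EV 1 = 0 := by simp [EV, VR]

set_option maxHeartbeats 2000000 in
/-- (Proposition 2, positive recurrence of state 1) For the randomized Collatz chain
started at `X₀ = 1`, the first return time `T := inf {n ≥ 1 : Xₙ = 1}` satisfies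
`E[T] < ∞`; in particular `T < ∞` a.s. -/
theorem stmt_14
    {Ω : Type*} [MeasurableSpace Ω] (μ : MeasureTheory.Measure Ω)
    [MeasureTheory.IsProbabilityMeasure μ]
    (ξ : ℕ → Ω → ℕ)
    (hξval : ∀ n ω, ξ n ω = 1 ∨ ξ n ω = 3 ∨ ξ n ω = 5 ∨ ξ n ω = 7)
    (hξmeas : ∀ n, Measurable (ξ n))
    (hξindep : ProbabilityTheory.iIndepFun ξ μ)
    (hξdist : ∀ n, μ {ω | ξ n ω = 1} = 1/4 ∧ μ {ω | ξ n ω = 3} = 1/4 ∧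
      μ {ω | ξ n ω = 5} = 1/4 ∧ μ {ω | ξ n ω = 7} = 1/4)
    (X : ℕ → Ω → ℕ)
    (hX0 : ∀ ω, X 0 ω = 1)
    (hXrec : ∀ n ω, X (n + 1) ω =
      (3 * X n ω + ξ (n + 1) ω) / 2 ^ padicValNat 2 (3 * X n ω + ξ (n + 1) ω))
    (T : Ω → ℕ∞)
    (hT : ∀ ω, T ω = ⨅ (n : ℕ) (_ : 1 ≤ n) (_ : X n ω = 1), (n : ℕ∞)) :
    ∫⁻ ω, (T ω : ENNReal) ∂μ < ⊤ ∧ ∀ᵐ ω ∂μ, T ω < ⊤ := by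
  classical
  have hXmeas := X_meas hξmeas hX0 hXrec
  set C : ENNReal := EV 3 + EV 5 with hC
  set G : ℕ → ENNReal :=
    fun m => ∫⁻ ω, (Aset X m).indicator (fun ω => EV (X m ω)) ω ∂μ with hG
  -- base estimate
  have hX1 : ∀ ω, EV (X 1 ω) ≤ C := by
    intro ω
    have h1 : X 1 ω = cstep 1 (ξ 1 ω) := by
      rw [show (1:ℕ) = 0 + 1 from rfl, hXrec 0 ω, hX0 ω, cstep]
    have e1 : cstep 1 1 = 1 := cstep_eq 1 1 2 1 (by norm_num) (by norm_num)
    have e3 : cstep 1 3 = 3 := cstep_eq 1 3 1 3 (by norm_num) (by norm_num)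
    have e5 : cstep 1 5 = 1 := cstep_eq 1 5 3 1 (by norm_num) (by norm_num)
    have e7 : cstep 1 7 = 5 := cstep_eq 1 7 1 5 (by norm_num) (by norm_num)
    rcases hξval 1 ω with h|h|h|h <;> rw [h1, h] <;>
      simp [e1, e3, e5, e7, EV_one, hC] <;>
      first
        | exact le_add_right le_rfl
        | exact le_add_left le_rfl
        | exact zero_le _
  have base : G 1 + μ (Aset X 1) ≤ C + 1 := by
    have h1 : G 1 ≤ ∫⁻ ω, EV (X 1 ω) ∂μ :=
      lintegral_mono (Set.indicator_le_self _ _)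
    have h3 : ∫⁻ ω, EV (X 1 ω) ∂μ ≤ C := by
      calc ∫⁻ ω, EV (X 1 ω) ∂μ ≤ ∫⁻ _, C ∂μ := lintegral_mono (fun ω => hX1 ω)
      _ = C := by rw [lintegral_const, measure_univ, mul_one]
    exact add_le_add (le_trans h1 h3) prob_le_one
  -- Foster induction
  have hsum : ∀ N : ℕ, (∑ k ∈ Finset.range (N+1), μ (Aset X (k+1))) + G (N+1) ≤ C + 1 := by
    intro N
    induction N with
    | zero => simpa [add_comm] using base
    | succ N ih =>
      have hstep := foster_step hξval hξmeas hξindep hξdist hX0 hXrec (N+1) (by omega)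
      calc (∑ k ∈ Finset.range (N+2), μ (Aset X (k+1))) + G (N+2)
          = (∑ k ∈ Finset.range (N+1), μ (Aset X (k+1)))
            + (G (N+2) + μ (Aset X (N+2))) := by
            rw [Finset.sum_range_succ]; ring
      _ ≤ (∑ k ∈ Finset.range (N+1), μ (Aset X (k+1))) + G (N+1) := by
            exact add_le_add le_rfl hstep
      _ ≤ C + 1 := ih
  have hsum' : ∀ N : ℕ, (∑ k ∈ Finset.range N, μ (Aset X (k+1))) ≤ C + 1 := by
    intro N
    cases N with
    | zero => simp
    | succ N => exact le_trans le_self_add (hsum N)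
  have htsum : (∑' k : ℕ, μ (Aset X k)) ≤ (C + 1) + 1 := by
    rw [ENNReal.tsum_eq_iSup_sum]
    refine iSup_le fun s => ?_
    obtain ⟨N, hN⟩ := s.exists_nat_subset_range
    refine le_trans (Finset.sum_le_sum_of_subset hN) ?_
    cases N with
    | zero => simp
    | succ M =>
      rw [Finset.sum_range_succ']
      exact add_le_add (hsum' M) prob_le_one
  -- T and Aset
  have hTgt : ∀ (m : ℕ) (ω : Ω), ω ∈ Aset X m ↔ (m : ℕ∞) < T ω := by
    intro m ω
    rw [hT ω]
    constructor
    · intro hA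
      have hle : ((m+1 : ℕ) : ℕ∞) ≤ ⨅ (k : ℕ) (_ : 1 ≤ k) (_ : X k ω = 1), (k : ℕ∞) := by
        refine le_iInf fun k => le_iInf fun h1 => le_iInf fun hX => ?_
        have : m + 1 ≤ k := by
          by_contra h
          exact hA k h1 (by omega) hX
        exact_mod_cast this
      refine lt_of_lt_of_le ?_ hle
      exact_mod_cast Nat.lt_succ_self m
    · intro hlt k h1 hk hX
      have hle : (⨅ (k : ℕ) (_ : 1 ≤ k) (_ : X k ω = 1), (k : ℕ∞)) ≤ (k : ℕ∞) :=
        iInf_le_of_le k (iInf_le_of_le h1 (iInf_le_of_le hX le_rfl))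
      have hkm : (m : ℕ∞) < (k : ℕ∞) := lt_of_lt_of_le hlt hle
      have : m < k := by exact_mod_cast hkm
      omega
  have hTrep : ∀ ω, ((T ω : ℕ∞) : ENNReal)
      = ∑' k : ℕ, (Aset X k).indicator (fun _ => (1:ENNReal)) ω := by
    intro ω
    have hind : ∀ k : ℕ, (Aset X k).indicator (fun _ => (1:ENNReal)) ω
        = if ((k : ℕ∞) < T ω) then 1 else 0 := by
      intro k
      rw [Set.indicator_apply]
      exact if_congr (hTgt k ω) rfl rfl
    rw [tsum_congr hind]
    by_cases hTop : T ω = ⊤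
    · rw [hTop]
      rw [tsum_congr (fun k : ℕ => if_pos (by exact_mod_cast WithTop.coe_lt_top k))]
      rw [ENat.toENNReal_top]
      exact (ENNReal.tsum_const_eq_top_of_ne_zero (by norm_num)).symm
    · obtain ⟨m, hm⟩ := WithTop.ne_top_iff_exists.1 hTop
      have hm' : ((m : ℕ) : ℕ∞) = T ω := by exact_mod_cast hm
      rw [← hm']
      have hsupp : ∀ k ∉ Finset.range m, (if ((k : ℕ∞) < (m : ℕ∞)) then (1:ENNReal) else 0) = 0 := by
        intro k hk
        rw [if_neg]
        intro hlt
        have : k < m := by exact_mod_cast hlt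
        simp [Finset.mem_range] at hk
        omega
      rw [tsum_eq_sum hsupp]
      have : ∀ k ∈ Finset.range m, (if ((k : ℕ∞) < (m : ℕ∞)) then (1:ENNReal) else 0) = 1 := by
        intro k hk
        rw [if_pos]
        exact_mod_cast Finset.mem_range.1 hk
      rw [Finset.sum_congr rfl this]
      simp [ENat.toENNReal_coe]
  have hmeasT : Measurable (fun ω => ((T ω : ℕ∞) : ENNReal)) := by
    have : (fun ω => ((T ω : ℕ∞) : ENNReal))
        = fun ω => ∑' k : ℕ, (Aset X k).indicator (fun _ => (1:ENNReal)) ω := funext hTrep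
    rw [this]
    exact Measurable.ennreal_tsum
      (fun k => measurable_const.indicator (Aset_meas X hXmeas k))
  have hint : ∫⁻ ω, ((T ω : ℕ∞) : ENNReal) ∂μ = ∑' k : ℕ, μ (Aset X k) := by
    rw [lintegral_congr hTrep,
      lintegral_tsum (fun k => (measurable_const.indicator (Aset_meas X hXmeas k)).aemeasurable)]
    refine tsum_congr (fun k => ?_)
    rw [lintegral_indicator_const (Aset_meas X hXmeas k), one_mul]
  have hfin : ∫⁻ ω, ((T ω : ℕ∞) : ENNReal) ∂μ < ⊤ := by
    rw [hint]
    refine lt_of_le_of_lt htsum ?_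
    rw [hC]
    have h3 := EV_ne_top 3
    have h5 := EV_ne_top 5
    exact lt_top_iff_ne_top.2 (by finiteness)
  refine ⟨hfin, ?_⟩
  have hae := MeasureTheory.ae_lt_top hmeasT hfin.ne
  refine hae.mono (fun ω h => ?_)
  rw [lt_top_iff_ne_top] at h ⊢
  intro htop
  rw [htop] at h
  exact h ENat.toENNReal_top
end

section
/- (Irreducibility) For the randomized Collatz chain, for every pair of positive odd integers x and y, if the chain is started at X_0 = x then P( there exists n ≥ 1 with X_n = y ) > 0. -/
namespace Stmt17Aux

/-- one step of the randomized Collatz map with noise `v`. -/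
def step (x v : ℕ) : ℕ := (3 * x + v) / 2 ^ padicValNat 2 (3 * x + v)

/-- running the chain along a list of noise values. -/
def run : ℕ → List ℕ → ℕ
  | x, [] => x
  | x, v :: s => run (step x v) s

lemma run_append (x : ℕ) (s t : List ℕ) : run x (s ++ t) = run (run x s) t := by
  induction s generalizing x with
  | nil => rfl
  | cons v s ih => simp [run, ih]

lemma step_eq {x v y d : ℕ} (hy : Odd y) (h : 3 * x + v = y * 2 ^ d) : step x v = y := by
  have hy0 : y ≠ 0 := by rintro rfl; simp [Nat.odd_iff] at hy
  have hval : padicValNat 2 (3 * x + v) = d := by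
    rw [h, padicValNat.mul hy0 (pow_ne_zero _ two_ne_zero), padicValNat.prime_pow,
      padicValNat.eq_zero_of_not_dvd (by rwa [Nat.two_dvd_ne_zero, ← Nat.odd_iff]), zero_add]
  rw [step, hval, h, Nat.mul_div_cancel _ (pow_pos two_pos d)]

lemma step_eq_ordCompl (x v : ℕ) : step x v = ordCompl[2] (3 * x + v) := by
  rw [step, Nat.factorization_def _ Nat.prime_two]

lemma step_pos {x v : ℕ} (h : 3 * x + v ≠ 0) : 0 < step x v := by
  rw [step_eq_ordCompl]; exact Nat.ordCompl_pos 2 h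

lemma step_odd {x v : ℕ} (h : 3 * x + v ≠ 0) : Odd (step x v) := by
  rw [Nat.odd_iff, ← Nat.two_dvd_ne_zero, step_eq_ordCompl]
  exact Nat.not_dvd_ordCompl Nat.prime_two h

/-- values allowed for the noise -/
def Valid (s : List ℕ) : Prop := ∀ v ∈ s, v = 1 ∨ v = 3 ∨ v = 5 ∨ v = 7

/-- descent: from any odd positive `x` one can reach `1`. -/
lemma to_one : ∀ x : ℕ, Odd x → 0 < x → ∃ s : List ℕ, Valid s ∧ run x s = 1 := by
  intro x
  induction x using Nat.strong_induction_on with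
  | _ x ih =>
    intro hx hxpos
    rcases eq_or_lt_of_le (show 1 ≤ x from hxpos) with h1 | h3
    · exact ⟨[], fun v hv => absurd hv ((List.not_mem_nil (a := v))), by rw [← h1]; rfl⟩
    have hx2 : x % 2 = 1 := Nat.odd_iff.mp hx
    have hx3 : 3 ≤ x := by omega
    -- choose the noise making 3x + c divisible by 8
    set c : ℕ := 8 - (3 * x) % 8 with hc
    have hcmem : c = 1 ∨ c = 3 ∨ c = 5 ∨ c = 7 := by omega
    have h8 : 8 ∣ 3 * x + c := by omega
    have hne : 3 * x + c ≠ 0 := by omega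
    have hd : 3 ≤ padicValNat 2 (3 * x + c) := by
      rw [← Nat.factorization_def _ Nat.prime_two]
      exact (Nat.Prime.pow_dvd_iff_le_factorization Nat.prime_two hne).mp (by norm_num; exact h8)
    have hlt : step x c < x := by
      have h1 : step x c ≤ (3 * x + c) / 8 := by
        rw [step]
        exact Nat.div_le_div_left (by calc (8:ℕ) = 2^3 := by norm_num
          _ ≤ 2 ^ padicValNat 2 (3 * x + c) := Nat.pow_le_pow_right (by norm_num) hd)
          (by positivity)
      have h2 : (3 * x + c) / 8 < x := by
        rw [Nat.div_lt_iff_lt_mul (by norm_num)]; omega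
      omega
    obtain ⟨s, hsv, hs⟩ := ih (step x c) hlt (step_odd hne) (step_pos hne)
    refine ⟨c :: s, ?_, hs⟩
    intro v hv
    rcases List.mem_cons.mp hv with rfl | hv
    exacts [hcmem, hsv v hv]

/-- ascent: from `1` one can reach any odd positive `y` in at least one step. -/
lemma from_one : ∀ y : ℕ, Odd y → 0 < y →
    ∃ s : List ℕ, s ≠ [] ∧ Valid s ∧ run 1 s = y := by
  intro y
  induction y using Nat.strong_induction_on with
  | _ y ih =>
    intro hy hypos
    have hy2 : y % 2 = 1 := Nat.odd_iff.mp hy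
    rcases eq_or_lt_of_le (show 1 ≤ y from hypos) with h1 | h3
    · refine ⟨[1], by simp, ?_, ?_⟩
      · intro v hv; simp at hv; omega
      · show step 1 1 = y
        rw [← h1]; exact step_eq (d := 2) (by norm_num) (by norm_num)
    have hy3 : 3 ≤ y := by omega
    -- choose noise c ∈ {1,3,5} with 3 ∣ 2y - c
    have pick : ∃ c : ℕ, (c = 1 ∨ c = 3 ∨ c = 5) ∧ (2 * y - c) % 3 = 0 := by
      have h3' : (2 * y) % 3 = 0 ∨ (2 * y) % 3 = 1 ∨ (2 * y) % 3 = 2 := by omega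
      rcases h3' with h | h | h
      · exact ⟨3, by omega, by omega⟩
      · exact ⟨1, by omega, by omega⟩
      · exact ⟨5, by omega, by omega⟩
    obtain ⟨c, hc, hmod⟩ := pick
    set x' : ℕ := (2 * y - c) / 3 with hx'
    have heq : 3 * x' + c = 2 * y := by omega
    have hx'2 : x' % 2 = 1 := by omega
    have hx'lt : x' < y := by omega
    have hx'pos : 0 < x' := by omega
    obtain ⟨s, hsne, hsv, hs⟩ := ih x' hx'lt (Nat.odd_iff.mpr hx'2) hx'pos
    refine ⟨s ++ [c], by simp, ?_, ?_⟩
    · intro v hv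
      rcases List.mem_append.mp hv with hv | hv
      · exact hsv v hv
      · simp at hv; omega
    · rw [run_append, hs]
      show step x' c = y
      exact step_eq hy (d := 1) (by rw [pow_one]; omega)

end Stmt17Aux

open Stmt17Aux in
/-- (Irreducibility) For the randomized Collatz chain started at a positive odd integer
`x`, for every positive odd integer `y` one has `P(∃ n ≥ 1, Xₙ = y) > 0`. -/
theorem stmt_17
    {Ω : Type*} [MeasurableSpace Ω] (μ : MeasureTheory.Measure Ω)
    [MeasureTheory.IsProbabilityMeasure μ]
    (ξ : ℕ → Ω → ℕ)
    (hξval : ∀ n ω, ξ n ω = 1 ∨ ξ n ω = 3 ∨ ξ n ω = 5 ∨ ξ n ω = 7)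
    (hξmeas : ∀ n, Measurable (ξ n))
    (hξindep : ProbabilityTheory.iIndepFun ξ μ)
    (hξdist : ∀ n, μ {ω | ξ n ω = 1} = 1/4 ∧ μ {ω | ξ n ω = 3} = 1/4 ∧
      μ {ω | ξ n ω = 5} = 1/4 ∧ μ {ω | ξ n ω = 7} = 1/4)
    (x : ℕ) (hx : Odd x) (hxpos : 0 < x)
    (y : ℕ) (hy : Odd y) (hypos : 0 < y)
    (X : ℕ → Ω → ℕ)
    (hX0 : ∀ ω, X 0 ω = x)
    (hXrec : ∀ n ω, X (n + 1) ω =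
      (3 * X n ω + ξ (n + 1) ω) / 2 ^ padicValNat 2 (3 * X n ω + ξ (n + 1) ω)) :
    0 < μ {ω | ∃ n, 1 ≤ n ∧ X n ω = y} := by
  -- build a deterministic noise sequence driving x to y
  obtain ⟨s1, hs1v, hs1⟩ := to_one x hx hxpos
  obtain ⟨s2, hs2ne, hs2v, hs2⟩ := from_one y hy hypos
  set s : List ℕ := s1 ++ s2 with hsdef
  have hrun : run x s = y := by rw [hsdef, run_append, hs1, hs2]
  have hsv : Valid s := by
    intro v hv; rcases List.mem_append.mp hv with hv | hv
    exacts [hs1v v hv, hs2v v hv]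
  set L : ℕ := s.length with hL
  have hL1 : 1 ≤ L := by
    rw [hL, hsdef]
    have := List.length_pos_iff.mpr hs2ne
    simp; omega
  -- the event that the first L noises equal s
  set S : Finset ℕ := (Finset.range L).image (· + 1) with hS
  set sets : ℕ → Set ℕ := fun n => {s.getD (n - 1) 0} with hsets
  set E : Set Ω := ⋂ n ∈ S, ξ n ⁻¹' sets n with hE
  have hmeasE : μ E = ∏ n ∈ S, μ (ξ n ⁻¹' sets n) :=
    hξindep.measure_inter_preimage_eq_mul S (fun i _ => measurableSet_singleton _)
  have hfactor : ∀ n ∈ S, μ (ξ n ⁻¹' sets n) = 1/4 := by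
    intro n hn
    obtain ⟨i, hi, rfl⟩ := Finset.mem_image.mp hn
    rw [Finset.mem_range] at hi
    have hiL : i < s.length := by simpa using hi
    have hmem : s.getD (i + 1 - 1) 0 ∈ s := by
      rw [show i + 1 - 1 = i from rfl, List.getD_eq_getElem s 0 hiL]
      exact List.getElem_mem hiL
    have hpre : ξ (i+1) ⁻¹' sets (i+1) = {ω | ξ (i+1) ω = s.getD (i + 1 - 1) 0} := rfl
    obtain ⟨d1, d3, d5, d7⟩ := hξdist (i+1)
    rcases hsv _ hmem with h | h | h | h <;> rw [hpre, h]
    exacts [d1, d3, d5, d7]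
  have hEpos : 0 < μ E := by
    rw [hmeasE, Finset.prod_congr rfl hfactor, Finset.prod_const]
    have : (1/4 : ENNReal) ^ S.card ≠ 0 := pow_ne_zero _ (by norm_num)
    exact pos_iff_ne_zero.mpr this
  -- on E, the chain follows the deterministic run
  have hsub : E ⊆ {ω | ∃ n, 1 ≤ n ∧ X n ω = y} := by
    intro ω hω
    have hξω : ∀ i < L, ξ (i + 1) ω = s.getD i 0 := by
      intro i hi
      have hn : i + 1 ∈ S := Finset.mem_image.mpr ⟨i, Finset.mem_range.mpr hi, rfl⟩
      have := Set.mem_iInter₂.mp hω (i+1) hn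
      simpa [hsets] using this
    have key : ∀ n ≤ L, X n ω = run x (s.take n) := by
      intro n hn
      induction n with
      | zero => simpa [run] using hX0 ω
      | succ n ihn =>
        have hnL : n < L := by omega
        have h1 : X n ω = run x (s.take n) := ihn (by omega)
        have htake : s.take (n + 1) = s.take n ++ [s.getD n 0] := by
          rw [List.take_succ]
          congr 1
          rw [List.getElem?_eq_getElem (by simpa using hnL)]
          simp [List.getD, List.getElem?_eq_getElem (show n < s.length by simpa using hnL)]
        rw [htake, run_append, ← h1]
        show X (n+1) ω = step (X n ω) (s.getD n 0)
        rw [← hξω n hnL]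
        exact hXrec n ω
    refine ⟨L, hL1, ?_⟩
    rw [key L le_rfl, List.take_length, hrun]
  exact lt_of_lt_of_le hEpos (MeasureTheory.measure_mono hsub)
end
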